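/- arXiv:1107.2028 — 7 statements merged into one kernel-verified Lean document; each statement's English description precedes it below -/
import Mathlib

section
/- If A is a complex symmetric N×N matrix (A = Aᵀ), then A admits a Takagi factorization: there exist nonnegative reals s₁,…,s_N and an orthonormal set of vectors u₁,…,u_N in ℂ^N such that A = Σ_m s_m · conj(u_m) · u_mᴴ, equivalently A u_m = s_m · conj(u_m) for each m. -/
open Matrix

lemma exists_takagi_pair (n : ℕ) (A : Matrix (Fin (n+1)) (Fin (n+1)) ℂ) (hA : A = Aᵀ) :
    ∃ (s : ℝ) (v : Fin (n+1) → ℂ), v ≠ 0 ∧ A.mulVec v = (s : ℂ) • star v := by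
  set Ar : Matrix (Fin (n+1)) (Fin (n+1)) ℝ := A.map Complex.re with hAr
  set Ai : Matrix (Fin (n+1)) (Fin (n+1)) ℝ := A.map Complex.im with hAi
  set R : Matrix (Fin (n+1) ⊕ Fin (n+1)) (Fin (n+1) ⊕ Fin (n+1)) ℝ :=
    fromBlocks Ar (-Ai) (-Ai) (-Ar) with hR
  have hsymm : ∀ i j, A i j = A j i := fun i j => by
    conv_lhs => rw [hA, transpose_apply]
  have hArT : Arᵀ = Ar := by
    ext i j; simp [hAr, Matrix.map_apply, hsymm i j]
  have hAiT : Aiᵀ = Ai := by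
    ext i j; simp [hAi, Matrix.map_apply, hsymm i j]
  have hRh : R.IsHermitian := by
    rw [Matrix.IsHermitian, conjTranspose_eq_transpose_of_trivial, hR,
      fromBlocks_transpose, transpose_neg, transpose_neg, hArT, hAiT]
  set w : Fin (n+1) ⊕ Fin (n+1) → ℝ := ⇑(hRh.eigenvectorBasis (Sum.inl 0)) with hw
  set lam : ℝ := hRh.eigenvalues (Sum.inl 0) with hlam
  have hwe : R *ᵥ w = lam • w := hRh.mulVec_eigenvectorBasis (Sum.inl 0)
  have h0 : hRh.eigenvectorBasis (Sum.inl 0) ≠ 0 := by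
    intro h
    have h1 := (hRh.eigenvectorBasis).orthonormal.1 (Sum.inl 0)
    rw [h, norm_zero] at h1
    norm_num at h1
  have hwne : w ≠ 0 := by
    intro h
    exact h0 (by ext i; exact congrFun h i)
  set x : Fin (n+1) → ℝ := fun j => w (Sum.inl j) with hx
  set y : Fin (n+1) → ℝ := fun j => w (Sum.inr j) with hy
  have hwelim : w = Sum.elim x y := by ext i; cases i <;> rfl
  have hblock := hwe
  rw [hR, hwelim, fromBlocks_mulVec] at hblock
  have E1 : ∀ j, (∑ k, ((A j k).re * x k - (A j k).im * y k)) = lam * x j := by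
    intro j
    have e1 := congrFun hblock (Sum.inl j)
    simp only [Sum.elim_inl, Pi.add_apply, Pi.smul_apply, mulVec, dotProduct, Matrix.neg_apply,
      smul_eq_mul, neg_mul, Finset.sum_neg_distrib, Function.comp, hAr, hAi,
      Matrix.map_apply, Sum.elim_inr] at e1
    rw [Finset.sum_sub_distrib]
    linarith [e1]
  have E2 : ∀ j, (∑ k, ((A j k).re * y k + (A j k).im * x k)) = -(lam * y j) := by
    intro j
    have e2 := congrFun hblock (Sum.inr j)
    simp only [Sum.elim_inl, Pi.add_apply, Pi.smul_apply, mulVec, dotProduct, Matrix.neg_apply,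
      smul_eq_mul, neg_mul, Finset.sum_neg_distrib, Function.comp, hAr, hAi,
      Matrix.map_apply, Sum.elim_inr] at e2
    rw [Finset.sum_add_distrib]
    linarith [e2]
  refine ⟨lam, fun k => ⟨x k, y k⟩, ?_, ?_⟩
  · intro h
    apply hwne
    rw [hwelim]
    ext i
    cases i with
    | inl j => simpa using congrArg Complex.re (congrFun h j)
    | inr j => simpa using congrArg Complex.im (congrFun h j)
  · funext j
    apply Complex.ext
    · simp only [mulVec, dotProduct, Pi.smul_apply, Pi.star_apply, Complex.re_sum,
        Complex.mul_re, Complex.smul_re, Complex.ofReal_re]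
      simpa using E1 j
    · simp only [mulVec, dotProduct, Pi.smul_apply, Pi.star_apply, Complex.im_sum,
        Complex.mul_im, Complex.smul_im, Complex.ofReal_re]
      simpa [add_comm] using E2 j

lemma exists_unit_takagi (n : ℕ) (A : Matrix (Fin (n+1)) (Fin (n+1)) ℂ) (hA : A = Aᵀ) :
    ∃ (s : ℝ) (v : Fin (n+1) → ℂ), 0 ≤ s ∧ dotProduct (star v) v = 1 ∧
      A.mulVec v = (s : ℂ) • star v := by
  -- first get a pair with nonneg s
  obtain ⟨s₀, v₀, hv₀, he₀⟩ := exists_takagi_pair n A hA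
  obtain ⟨s, v, hs, hv, he⟩ :
      ∃ (s : ℝ) (v : Fin (n+1) → ℂ), 0 ≤ s ∧ v ≠ 0 ∧ A.mulVec v = (s : ℂ) • star v := by
    rcases le_or_gt 0 s₀ with h | h
    · exact ⟨s₀, v₀, h, hv₀, he₀⟩
    · refine ⟨-s₀, Complex.I • v₀, by linarith, ?_, ?_⟩
      · simpa [smul_eq_zero, Complex.I_ne_zero] using hv₀
      · rw [mulVec_smul, he₀, star_smul]
        simp only [smul_smul]
        congr 1
        rw [Complex.star_def, Complex.conj_I]
        push_cast
        ring
    -- normalize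
  set t : ℝ := ∑ k, Complex.normSq (v k) with ht
  have htpos : 0 < t := by
    obtain ⟨k, hk⟩ : ∃ k, v k ≠ 0 := by
      by_contra h
      push_neg at h
      exact hv (funext h)
    have : 0 < Complex.normSq (v k) := Complex.normSq_pos.2 hk
    exact Finset.sum_pos' (fun i _ => Complex.normSq_nonneg _) ⟨k, Finset.mem_univ k, this⟩
  set c : ℝ := (Real.sqrt t)⁻¹ with hc
  have hc2 : c ^ 2 * t = 1 := by
    rw [hc, ← Real.sqrt_inv, Real.sq_sqrt (by positivity)]
    field_simp
  refine ⟨s, (c : ℂ) • v, hs, ?_, ?_⟩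
  · have hdot : dotProduct (star v) v = (t : ℂ) := by
      simp only [dotProduct, Pi.star_apply, ht]
      push_cast
      refine Finset.sum_congr rfl fun k _ => ?_
      rw [Complex.star_def, Complex.normSq_eq_conj_mul_self]
    rw [star_smul, smul_dotProduct, dotProduct_smul, hdot]
    rw [smul_eq_mul, smul_eq_mul, Complex.star_def, Complex.conj_ofReal]
    norm_cast
    linear_combination hc2
  · rw [mulVec_smul, he, star_smul]
    rw [smul_smul, smul_smul]
    congr 1
    rw [Complex.star_def, Complex.conj_ofReal]
    ring

lemma extend_basis (n : ℕ) (v₀ : Fin (n+1) → ℂ)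
    (hv₀ : dotProduct (star v₀) v₀ = 1) :
    ∃ bv : Fin (n+1) → Fin (n+1) → ℂ, bv 0 = v₀ ∧
      ∀ j k, dotProduct (star (bv j)) (bv k) = if j = k then 1 else 0 := by
  classical
  set E := EuclideanSpace ℂ (Fin (n+1))
  set v₀' : E := (WithLp.equiv 2 _).symm v₀ with hv₀'
  have hnormsq : (∑ k, Complex.normSq (v₀ k)) = 1 := by
    have : ((∑ k, Complex.normSq (v₀ k) : ℝ) : ℂ) = 1 := by
      rw [← hv₀]
      push_cast
      simp only [dotProduct, Pi.star_apply]
      exact Finset.sum_congr rfl fun k _ => by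
        rw [Complex.star_def, Complex.normSq_eq_conj_mul_self]
    exact_mod_cast this
  have hnorm : ‖v₀'‖ = 1 := by
    rw [EuclideanSpace.norm_eq]
    have : ∀ i, ‖v₀ i‖ ^ 2 = Complex.normSq (v₀ i) := fun i => by
      exact Complex.sq_norm _
    simp only [hv₀', WithLp.equiv_symm_apply, WithLp.ofLp_toLp]
    rw [show (∑ i, ‖v₀ i‖ ^ 2) = 1 by rw [← hnormsq]; exact Finset.sum_congr rfl fun i _ => this i]
    exact Real.sqrt_one
  have horth : Orthonormal ℂ (Set.restrict {(0 : Fin (n+1))} (fun _ : Fin (n+1) => v₀')) := by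
    constructor
    · intro i; exact hnorm
    · intro i j hij
      exfalso
      apply hij
      ext
      have hi := i.2; have hj := j.2
      simp only [Set.mem_singleton_iff] at hi hj
      rw [hi, hj]
  obtain ⟨b, hb⟩ := horth.exists_orthonormalBasis_extension_of_card_eq
    (by simp only [E, finrank_euclideanSpace, Fintype.card_fin]) (s := {(0:Fin (n+1))})
  refine ⟨fun j => ⇑(b j), ?_, ?_⟩
  · have h3 := hb 0 rfl
    funext i
    show (WithLp.equiv 2 _) (b 0) i = v₀ i
    rw [h3, hv₀']
    rfl
  · intro j k
    have := b.orthonormal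
    rw [orthonormal_iff_ite] at this
    have h2 := this j k
    rw [← h2]
    simp only [PiLp.inner_apply, RCLike.inner_apply, dotProduct, Pi.star_apply]
    rw [EuclideanSpace.inner_eq_star_dotProduct, dotProduct_comm]
    rfl

lemma takagi_aux : ∀ (N : ℕ) (A : Matrix (Fin N) (Fin N) ℂ), A = Aᵀ →
    ∃ (s : Fin N → ℝ) (u : Fin N → Fin N → ℂ),
      (∀ m, 0 ≤ s m) ∧
      (∀ m m', dotProduct (star (u m)) (u m') = if m = m' then 1 else 0) ∧
      (∀ m, A.mulVec (u m) = (s m : ℂ) • star (u m)) := by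
  intro N
  induction N with
  | zero =>
    intro A hA
    exact ⟨fun _ => 0, fun _ => 0, fun m => le_refl _, fun m => m.elim0, fun m => m.elim0⟩
  | succ n ih =>
    intro A hA
    have hsymm : ∀ i j, A i j = A j i := fun i j => by
      conv_lhs => rw [hA, transpose_apply]
    obtain ⟨s₀, v₀, hs₀, hv₀1, he₀'⟩ := exists_unit_takagi n A hA
    obtain ⟨bv, hbv0, hbo⟩ := extend_basis n v₀ hv₀1
    have he₀ : A.mulVec (bv 0) = (s₀ : ℂ) • star (bv 0) := by rw [hbv0]; exact he₀'
    -- completeness of the basis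
    have comp : ∀ i l : Fin (n+1), (∑ j, star (bv j i) * bv j l) = if i = l then 1 else 0 := by
      set U : Matrix (Fin (n+1)) (Fin (n+1)) ℂ := Matrix.of (fun i j => bv j i) with hU
      have hU1 : Uᴴ * U = 1 := by
        ext j k
        have := hbo j k
        simp only [dotProduct, Pi.star_apply] at this
        simp only [Matrix.mul_apply, conjTranspose_apply, hU, Matrix.of_apply,
          Matrix.one_apply, this]
      have hU2 : U * Uᴴ = 1 := mul_eq_one_comm.mp hU1
      intro i l
      have h3 := congrFun (congrFun hU2 l) i
      simp only [Matrix.mul_apply, conjTranspose_apply, hU, Matrix.of_apply,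
        Matrix.one_apply] at h3
      calc (∑ j, star (bv j i) * bv j l) = ∑ j, bv j l * star (bv j i) := by
            exact Finset.sum_congr rfl fun j _ => by ring
        _ = if l = i then 1 else 0 := h3
        _ = if i = l then 1 else 0 := by simp [eq_comm]
    have expand : ∀ (z : Fin (n+1) → ℂ) (i : Fin (n+1)),
        z i = ∑ j, (∑ l, bv j l * z l) * star (bv j i) := by
      intro z i
      have h1 : ∀ j, (∑ l, bv j l * z l) * star (bv j i)
          = ∑ l, (star (bv j i) * bv j l) * z l := fun j => by
        rw [Finset.sum_mul]; exact Finset.sum_congr rfl fun l _ => by ring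
      simp_rw [h1]
      rw [Finset.sum_comm]
      have h2 : ∀ l, (∑ j, (star (bv j i) * bv j l) * z l)
          = (if i = l then 1 else 0) * z l := fun l => by
        rw [← Finset.sum_mul, comp i l]
      simp_rw [h2]
      simp [ite_mul, Finset.sum_ite_eq]
    -- the Gram-type matrix
    set B : Fin (n+1) → Fin (n+1) → ℂ := fun j k => ∑ i, bv j i * (A.mulVec (bv k)) i with hB
    have hBsym : ∀ j k, B j k = B k j := by
      intro j k
      simp only [hB, Matrix.mulVec, dotProduct, Finset.mul_sum]
      rw [Finset.sum_comm]
      refine Finset.sum_congr rfl fun l _ => Finset.sum_congr rfl fun i _ => by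
        rw [hsymm l i]; ring
    have hB0 : ∀ k, B k 0 = if k = 0 then (s₀ : ℂ) else 0 := by
      intro k
      have h4 := hbo k 0
      simp only [dotProduct, Pi.star_apply] at h4
      have : B k 0 = (s₀ : ℂ) * star (∑ i, star (bv k i) * bv 0 i) := by
        simp only [hB, he₀, Pi.smul_apply, Pi.star_apply, smul_eq_mul, star_sum, star_mul',
          star_star, Finset.mul_sum]
        exact Finset.sum_congr rfl fun i _ => by ring
      rw [this, h4]
      split <;> simp
    have hB0' : ∀ k, B 0 k = if k = 0 then (s₀ : ℂ) else 0 := fun k => by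
      rw [hBsym]; exact hB0 k
    -- the compressed matrix
    set A' : Matrix (Fin n) (Fin n) ℂ := Matrix.of (fun j k => B j.succ k.succ) with hA'
    have hA's : A' = A'ᵀ := by
      ext j k
      exact hBsym j.succ k.succ
    obtain ⟨s', u', hs', hon', heig'⟩ := ih A' hA's
    -- the coefficient vectors
    set C : Fin (n+1) → Fin (n+1) → ℂ :=
      Fin.cons (Pi.single (0 : Fin (n+1)) 1) (fun m => Fin.cons 0 (u' m)) with hC
    set w : Fin (n+1) → Fin (n+1) → ℂ := fun m i => ∑ k, C m k * bv k i with hw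
    -- orthonormality transfer
    have key : ∀ c d : Fin (n+1) → ℂ,
        dotProduct (star fun i => ∑ k, c k * bv k i) (fun i => ∑ k, d k * bv k i)
          = dotProduct (star c) d := by
      intro c d
      have hboe : ∀ k l, (∑ i, star (bv k i) * bv l i) = if k = l then 1 else 0 := fun k l => by
        have := hbo k l
        simpa [dotProduct] using this
      simp only [dotProduct, Pi.star_apply, star_sum, star_mul']
      have h1 : ∀ i, (∑ k, star (c k) * star (bv k i)) * (∑ l, d l * bv l i)
          = ∑ k, ∑ l, (star (c k) * d l) * (star (bv k i) * bv l i) := by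
        intro i
        rw [Finset.sum_mul_sum]
        exact Finset.sum_congr rfl fun k _ => Finset.sum_congr rfl fun l _ => by ring
      simp_rw [h1]
      rw [Finset.sum_comm]
      refine Finset.sum_congr rfl fun k _ => ?_
      rw [Finset.sum_comm]
      have h2 : ∀ l, (∑ i, (star (c k) * d l) * (star (bv k i) * bv l i))
          = (star (c k) * d l) * (if k = l then 1 else 0) := fun l => by
        rw [← Finset.mul_sum, hboe k l]
      simp_rw [h2]
      simp [mul_ite, Finset.sum_ite_eq]
    have hCdp : ∀ m m', dotProduct (star (C m)) (C m') = if m = m' then 1 else 0 := by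
      intro m m'
      induction m using Fin.cases with
      | zero =>
        induction m' using Fin.cases with
        | zero => simp [hC, dotProduct, Pi.single_apply]
        | succ m' =>
          simp only [hC, Fin.cons_zero, Fin.cons_succ, dotProduct, Pi.star_apply]
          rw [Fin.sum_univ_succ]
          simp [Pi.single_apply, Fin.succ_ne_zero, if_neg (Fin.succ_ne_zero _).symm,
            (Fin.succ_ne_zero m').symm]
      | succ m =>
        induction m' using Fin.cases with
        | zero =>
          simp only [hC, Fin.cons_zero, Fin.cons_succ, dotProduct, Pi.star_apply]
          rw [Fin.sum_univ_succ]
          simp [Pi.single_apply, Fin.succ_ne_zero, (Fin.succ_ne_zero m).symm]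
        | succ m' =>
          have h5 := hon' m m'
          simp only [dotProduct, Pi.star_apply] at h5
          simp only [hC, Fin.cons_succ, dotProduct, Pi.star_apply]
          rw [Fin.sum_univ_succ]
          simp only [Fin.cons_zero, Fin.cons_succ, star_zero, zero_mul, zero_add]
          rw [h5]
          simp [Fin.succ_inj]
    -- eigen-relation coefficients
    have hBC : ∀ m j, (∑ k, B j k * C m k) = ((Fin.cons s₀ s' : Fin (n+1) → ℝ) m : ℂ) * star (C m j) := by
      intro m j
      induction m using Fin.cases with
      | zero =>
        simp only [hC, Fin.cons_zero]
        rw [Fin.sum_univ_succ]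
        simp only [Pi.single_apply]
        rw [hB0 j]
        simp [Pi.single_apply, Fin.succ_ne_zero, eq_comm]
      | succ m =>
        simp only [hC, Fin.cons_succ]
        rw [Fin.sum_univ_succ]
        simp only [Fin.cons_zero, Fin.cons_succ, mul_zero, zero_add]
        induction j using Fin.cases with
        | zero =>
          have hz : ∀ k : Fin n, B 0 k.succ = 0 := fun k => by
            rw [hB0' k.succ, if_neg (Fin.succ_ne_zero k)]
          simp [hz]
        | succ l =>
          have h6 := congrFun (heig' m) l
          simp only [Matrix.mulVec, dotProduct, Pi.smul_apply, Pi.star_apply,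
            smul_eq_mul, hA', Matrix.of_apply] at h6
          rw [h6]
          simp [Fin.cons_succ]
    -- eigen-relations for w
    have heigw : ∀ m, A.mulVec (w m) = (((Fin.cons s₀ s' : Fin (n+1) → ℝ) m : ℝ) : ℂ) • star (w m) := by
      intro m
      funext i
      have step1 : (A.mulVec (w m)) i = ∑ k, C m k * (A.mulVec (bv k)) i := by
        simp only [Matrix.mulVec, dotProduct, hw, Finset.mul_sum]
        rw [Finset.sum_comm]
        exact Finset.sum_congr rfl fun k _ => Finset.sum_congr rfl fun l _ => by ring
      have step2 : ∀ k, (A.mulVec (bv k)) i = ∑ j, B j k * star (bv j i) := by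
        intro k
        calc (A.mulVec (bv k)) i
            = ∑ j, (∑ l, bv j l * (A.mulVec (bv k)) l) * star (bv j i) := expand _ i
          _ = ∑ j, B j k * star (bv j i) := by
              exact Finset.sum_congr rfl fun j _ => by rw [hB]
      calc (A.mulVec (w m)) i = ∑ k, C m k * (A.mulVec (bv k)) i := step1
        _ = ∑ k, C m k * ∑ j, B j k * star (bv j i) := by
            exact Finset.sum_congr rfl fun k _ => by rw [step2 k]
        _ = ∑ j, (∑ k, B j k * C m k) * star (bv j i) := by
            simp_rw [Finset.mul_sum, Finset.sum_mul]
            rw [Finset.sum_comm]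
            exact Finset.sum_congr rfl fun j _ => Finset.sum_congr rfl fun k _ => by ring
        _ = ∑ j, (((Fin.cons s₀ s' : Fin (n+1) → ℝ) m : ℂ) * star (C m j)) * star (bv j i) := by
            exact Finset.sum_congr rfl fun j _ => by rw [hBC m j]
        _ = ((Fin.cons s₀ s' : Fin (n+1) → ℝ) m : ℂ) * star (∑ j, C m j * bv j i) := by
            rw [star_sum, Finset.mul_sum]
            exact Finset.sum_congr rfl fun j _ => by rw [star_mul']; ring
        _ = ((((Fin.cons s₀ s' : Fin (n+1) → ℝ) m : ℝ) : ℂ) • star (w m)) i := by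
            simp [hw]
    refine ⟨Fin.cons s₀ s', w, ?_, ?_, heigw⟩
    · intro m
      induction m using Fin.cases with
      | zero => simpa using hs₀
      | succ m => simpa using hs' m
    · intro m m'
      have h7 := (key (C m) (C m')).trans (hCdp m m')
      simpa only [hw] using h7

/-- Takagi factorization of a complex symmetric matrix. -/
theorem takagi_factorization (N : ℕ) (A : Matrix (Fin N) (Fin N) ℂ)
    (hA : A = Aᵀ) :
    ∃ (s : Fin N → ℝ) (u : Fin N → Fin N → ℂ),
      (∀ m, 0 ≤ s m) ∧
      (∀ m m', dotProduct (star (u m)) (u m') = if m = m' then 1 else 0) ∧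
      A = ∑ m, (s m : ℂ) • Matrix.vecMulVec (star (u m)) (star (u m)) ∧
      ∀ m, A.mulVec (u m) = (s m : ℂ) • star (u m) := by
  obtain ⟨s, u, hs, hon, heig⟩ := takagi_aux N A hA
  refine ⟨s, u, hs, hon, ?_, heig⟩
  have comp : ∀ j l : Fin N, (∑ m, star (u m j) * u m l) = if j = l then 1 else 0 := by
    set U : Matrix (Fin N) (Fin N) ℂ := Matrix.of (fun i j => u j i) with hU
    have hU1 : Uᴴ * U = 1 := by
      ext j k
      have := hon j k
      simp only [dotProduct, Pi.star_apply] at this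
      simp only [Matrix.mul_apply, conjTranspose_apply, hU, Matrix.of_apply,
        Matrix.one_apply, this]
    have hU2 : U * Uᴴ = 1 := mul_eq_one_comm.mp hU1
    intro j l
    have h3 := congrFun (congrFun hU2 l) j
    simp only [Matrix.mul_apply, conjTranspose_apply, hU, Matrix.of_apply,
      Matrix.one_apply] at h3
    calc (∑ m, star (u m j) * u m l) = ∑ m, u m l * star (u m j) := by
          exact Finset.sum_congr rfl fun m _ => by ring
      _ = if l = j then 1 else 0 := h3
      _ = if j = l then 1 else 0 := by simp [eq_comm]
  ext i j
  calc A i j = ∑ l, A i l * (if j = l then 1 else 0) := by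
        simp [mul_ite, Finset.sum_ite_eq]
    _ = ∑ l, A i l * ∑ m, star (u m j) * u m l := by
        exact Finset.sum_congr rfl fun l _ => by rw [comp j l]
    _ = ∑ m, star (u m j) * ∑ l, A i l * u m l := by
        simp_rw [Finset.mul_sum]
        rw [Finset.sum_comm]
        exact Finset.sum_congr rfl fun m _ => Finset.sum_congr rfl fun l _ => by ring
    _ = ∑ m, star (u m j) * ((s m : ℂ) * star (u m i)) := by
        refine Finset.sum_congr rfl fun m _ => ?_
        congr 1
        have h8 := congrFun (heig m) i
        simp only [Matrix.mulVec, dotProduct, Pi.smul_apply, Pi.star_apply,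
          smul_eq_mul] at h8
        exact h8
    _ = (∑ m, (s m : ℂ) • Matrix.vecMulVec (star (u m)) (star (u m))) i j := by
        simp only [Matrix.sum_apply, Pi.smul_apply, Matrix.smul_apply,
          Matrix.vecMulVec_apply, Pi.star_apply, smul_eq_mul]
        exact Finset.sum_congr rfl fun m _ => by ring
end

section
/- Let w ∈ ℝ^N be a positive weight, A an N×N complex matrix, and B = diag(√w) · A · diag(√w). If B has a Takagi factorization Σ_m s_m conj(q_m) q_mᴴ with s₁ ≥ … ≥ s_N and the s_m distinct, then the unique minimizer over rank-at-most-k matrices R of the weighted Frobenius norm ‖A − R‖_w is R = Σ_{m=1}^{k} s_m conj(u_m) u_mᴴ, where u_m(l) = q_m(l)/√(w(l)). -/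
/-- Squared weighted Frobenius norm `‖A‖_w² = Σ_{j,l} w(j)|A(j,l)|² w(l)`. -/
noncomputable def wnormSq {N : ℕ} (w : Fin N → ℝ) (A : Matrix (Fin N) (Fin N) ℂ) : ℝ :=
  ∑ j, ∑ l, w j * ‖A j l‖ ^ 2 * w l

open Matrix Finset Module

variable {N : ℕ}

noncomputable def frobSq {N : ℕ} (M : Matrix (Fin N) (Fin N) ℂ) : ℝ :=
  (Matrix.trace (Mᴴ * M)).re

lemma frobSq_eq_sum (M : Matrix (Fin N) (Fin N) ℂ) :
    frobSq M = ∑ l, ∑ j, Complex.normSq (M j l) := by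
  simp only [frobSq, Matrix.trace, Matrix.diag, Matrix.mul_apply,
    Matrix.conjTranspose_apply, Complex.re_sum]
  congr 1; ext l; congr 1; ext j
  simp [Complex.normSq_apply]

lemma frobSq_nonneg (M : Matrix (Fin N) (Fin N) ℂ) : 0 ≤ frobSq M := by
  rw [frobSq_eq_sum]
  exact Finset.sum_nonneg fun l _ => Finset.sum_nonneg fun j _ => Complex.normSq_nonneg _

lemma frobSq_eq_zero_iff (M : Matrix (Fin N) (Fin N) ℂ) : frobSq M = 0 ↔ M = 0 := by
  rw [frobSq_eq_sum]
  constructor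
  · intro h
    ext j l
    have h1 := (Finset.sum_eq_zero_iff_of_nonneg (fun l _ => Finset.sum_nonneg
      fun j _ => Complex.normSq_nonneg (M j l))).1 h l (Finset.mem_univ _)
    have h2 := (Finset.sum_eq_zero_iff_of_nonneg (fun j _ =>
      Complex.normSq_nonneg (M j l))).1 h1 j (Finset.mem_univ _)
    simpa using Complex.normSq_eq_zero.1 h2
  · rintro rfl; simp

lemma frobSq_unitary_left {U M : Matrix (Fin N) (Fin N) ℂ} (hU : Uᴴ * U = 1) :
    frobSq (U * M) = frobSq M := by
  unfold frobSq
  rw [Matrix.conjTranspose_mul, Matrix.mul_assoc, ← Matrix.mul_assoc Uᴴ, hU, Matrix.one_mul]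

lemma frobSq_unitary_right {U M : Matrix (Fin N) (Fin N) ℂ} (hU : U * Uᴴ = 1) :
    frobSq (M * U) = frobSq M := by
  unfold frobSq
  rw [Matrix.conjTranspose_mul, ← Matrix.mul_assoc, Matrix.trace_mul_cycle, ← Matrix.mul_assoc U Uᴴ Mᴴ, hU, Matrix.one_mul]

variable {N : ℕ}

lemma exists_proj (k : ℕ) (hk : k ≤ N) (G : Matrix (Fin N) (Fin N) ℂ) (hG : G.rank ≤ k) :
    ∃ P : Matrix (Fin N) (Fin N) ℂ, Pᴴ = P ∧ P * P = P ∧ G * P = 0 ∧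
      P.trace = ((N - k : ℕ) : ℂ) := by
  classical
  set e : (Fin N → ℂ) ≃ₗ[ℂ] EuclideanSpace ℂ (Fin N) :=
    (WithLp.linearEquiv 2 ℂ (Fin N → ℂ)).symm with he
  set W : Submodule ℂ (EuclideanSpace ℂ (Fin N)) :=
    (LinearMap.ker G.mulVecLin).map (e : (Fin N → ℂ) →ₗ[ℂ] EuclideanSpace ℂ (Fin N)) with hW
  have hfr : finrank ℂ W = finrank ℂ (LinearMap.ker G.mulVecLin) :=
    LinearEquiv.finrank_map_eq e _
  have hrn := LinearMap.finrank_range_add_finrank_ker G.mulVecLin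
  have hpi : finrank ℂ (Fin N → ℂ) = N := by simp
  have hWge : N - k ≤ finrank ℂ W := by
    rw [hfr]
    have : G.rank = finrank ℂ (LinearMap.range G.mulVecLin) := rfl
    omega
  set b := stdOrthonormalBasis ℂ W with hb
  set x : Fin (N - k) → EuclideanSpace ℂ (Fin N) :=
    fun i => (b (Fin.castLE hWge i) : EuclideanSpace ℂ (Fin N)) with hx
  have hxker : ∀ i, G.mulVec (x i) = 0 := by
    intro i
    have hmem : (x i) ∈ W := (b (Fin.castLE hWge i)).2
    rw [hW, Submodule.mem_map] at hmem
    obtain ⟨y, hy, hyx⟩ := hmem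
    have : y = fun l => x i l := by rw [← hyx]; rfl
    rw [LinearMap.mem_ker] at hy
    have : G.mulVec (fun l => x i l) = 0 := by rw [← this]; exact hy
    exact this
  have hxon : ∀ i j, (∑ l, (starRingEnd ℂ) (x i l) * x j l) = if i = j then 1 else 0 := by
    intro i j
    have := orthonormal_iff_ite.1 b.orthonormal (Fin.castLE hWge i) (Fin.castLE hWge j)
    rw [Submodule.coe_inner] at this
    rw [PiLp.inner_apply] at this
    simp only [RCLike.inner_apply] at this
    refine (Finset.sum_congr rfl fun l _ => mul_comm _ _).trans (this.trans ?_)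
    congr 1
    simp [Fin.castLE_inj]
  refine ⟨∑ i, Matrix.vecMulVec (fun l => x i l) (star fun l => x i l), ?_, ?_, ?_, ?_⟩
  · ext j l
    simp only [Matrix.conjTranspose_apply, Matrix.sum_apply, Matrix.vecMulVec_apply,
      Pi.star_apply, star_sum, star_mul', star_star]
    exact Finset.sum_congr rfl fun a _ => mul_comm _ _
  · ext j l
    simp only [Matrix.mul_apply, Matrix.sum_apply, Matrix.vecMulVec_apply, Pi.star_apply]
    calc ∑ m, (∑ a, x a j * star (x a m)) * ∑ c, x c m * star (x c l)
        = ∑ a, ∑ c, (∑ m, star (x c m) * x a m) * (x c j * star (x a l)) := by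
          simp only [Finset.sum_mul, Finset.mul_sum]
          rw [Finset.sum_comm]
          refine Finset.sum_congr rfl fun a _ => ?_
          rw [Finset.sum_comm]
          refine Finset.sum_congr rfl fun c _ => ?_
          exact Finset.sum_congr rfl fun m _ => by ring
      _ = ∑ a, x a j * star (x a l) := by
          refine Finset.sum_congr rfl fun a _ => ?_
          rw [Finset.sum_eq_single a]
          · rw [show (∑ m, star (x a m) * x a m) = ∑ m, (starRingEnd ℂ) (x a m) * x a m
              from rfl, hxon a a, if_pos rfl, one_mul]
          · intro c _ hc
            rw [show (∑ m, star (x c m) * x a m) = ∑ m, (starRingEnd ℂ) (x c m) * x a m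
              from rfl, hxon c a, if_neg hc, zero_mul]
          · intro h; exact absurd (Finset.mem_univ a) h
  · ext j l
    simp only [Matrix.mul_apply, Matrix.sum_apply, Matrix.vecMulVec_apply, Pi.star_apply,
      Matrix.zero_apply, Finset.mul_sum]
    rw [Finset.sum_comm]
    refine Finset.sum_eq_zero fun a _ => ?_
    have : ∑ m, G j m * (x a m * star (x a l)) = (G.mulVec (x a)) j * star (x a l) := by
      rw [Matrix.mulVec, dotProduct, Finset.sum_mul]
      refine Finset.sum_congr rfl fun m _ => by ring
    rw [this, hxker a, Pi.zero_apply, zero_mul]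
  · rw [Matrix.trace]
    simp only [Matrix.diag_apply, Matrix.sum_apply, Matrix.vecMulVec_apply, Pi.star_apply]
    rw [Finset.sum_comm]
    have : ∀ a, ∑ j, x a j * star (x a j) = 1 := by
      intro a
      have h := hxon a a
      rw [if_pos rfl] at h
      calc ∑ j, x a j * star (x a j) = ∑ j, (starRingEnd ℂ) (x a j) * x a j :=
            Finset.sum_congr rfl fun m _ => by rw [mul_comm]; rfl
        _ = 1 := h
    simp only [this, Finset.sum_const, Finset.card_univ, Fintype.card_fin, nsmul_eq_mul, mul_one]

variable {N : ℕ}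

lemma weight_ineq (k : ℕ) (hk : k ≤ N) (d : Fin N → ℝ) (hd0 : ∀ j, 0 ≤ d j)
    (hdec : ∀ i j : Fin N, i < j → d j < d i)
    (p : Fin N → ℝ) (h0 : ∀ j, 0 ≤ p j) (h1 : ∀ j, p j ≤ 1)
    (hsum : ∑ j, p j = (N - k : ℕ)) :
    (∑ j ∈ univ.filter (fun j : Fin N => k ≤ j.1), d j ^ 2) ≤ ∑ j, d j ^ 2 * p j ∧
    ((∑ j ∈ univ.filter (fun j : Fin N => k ≤ j.1), d j ^ 2) = (∑ j, d j ^ 2 * p j) →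
      ∀ j : Fin N, p j = if j.1 < k then 0 else 1) := by
  classical
  rcases eq_or_lt_of_le hk with rfl | hkN
  · -- k = N
    have hfe : (univ.filter fun j : Fin k => k ≤ j.1) = ∅ := by
      ext j; simp [Nat.not_le.2 j.2]
    have hp0 : ∀ j : Fin k, p j = 0 := by
      have : ∑ j, p j = 0 := by simpa using hsum
      intro j
      exact (Finset.sum_eq_zero_iff_of_nonneg (fun j _ => h0 j)).1 this j (mem_univ j)
    constructor
    · rw [hfe, Finset.sum_empty]
      exact Finset.sum_nonneg fun j _ => mul_nonneg (sq_nonneg _) (h0 j)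
    · intro _ j
      rw [hp0 j, if_pos j.2]
  · -- k < N
    set κ : Fin N := ⟨k, hkN⟩ with hκ
    set c : ℝ := d κ ^ 2 with hc
    have hcard : (univ.filter fun j : Fin N => k ≤ j.1) = Finset.Ici κ := by
      ext j; simp only [Finset.mem_filter, Finset.mem_univ, true_and, Finset.mem_Ici, Fin.le_def]; exact Iff.rfl
    have hcard2 : (univ.filter fun j : Fin N => k ≤ j.1).card = N - k := by
      rw [hcard, Fin.card_Ici]
    -- split sums
    have hsplit : ∀ f : Fin N → ℝ, (∑ j, f j)
        = (∑ j ∈ univ.filter (fun j : Fin N => j.1 < k), f j)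
          + ∑ j ∈ univ.filter (fun j : Fin N => k ≤ j.1), f j := by
      intro f
      rw [← Finset.sum_filter_add_sum_filter_not univ (fun j : Fin N => j.1 < k) f]
      congr 1
      apply Finset.sum_congr _ fun _ _ => rfl
      ext j; simp [Nat.not_lt]
    have hps : (∑ j ∈ univ.filter (fun j : Fin N => j.1 < k), p j)
        = ∑ j ∈ univ.filter (fun j : Fin N => k ≤ j.1), (1 - p j) := by
      have h2 : ∑ j ∈ univ.filter (fun j : Fin N => k ≤ j.1), (1 - p j)
          = (N - k : ℕ) - ∑ j ∈ univ.filter (fun j : Fin N => k ≤ j.1), p j := by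
        rw [Finset.sum_sub_distrib, Finset.sum_const, hcard2]
        simp
      have h3 := hsplit p
      rw [hsum] at h3
      rw [h2]
      linarith
    have key : (∑ j, d j ^ 2 * p j) - (∑ j ∈ univ.filter (fun j : Fin N => k ≤ j.1), d j ^ 2)
        = (∑ j ∈ univ.filter (fun j : Fin N => j.1 < k), (d j ^ 2 - c) * p j)
          + ∑ j ∈ univ.filter (fun j : Fin N => k ≤ j.1), (c - d j ^ 2) * (1 - p j) := by
      have e1 : ∑ j ∈ univ.filter (fun j : Fin N => j.1 < k), (d j ^ 2 - c) * p j
          = (∑ j ∈ univ.filter (fun j : Fin N => j.1 < k), d j ^ 2 * p j)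
            - c * ∑ j ∈ univ.filter (fun j : Fin N => j.1 < k), p j := by
        rw [Finset.mul_sum, ← Finset.sum_sub_distrib]
        exact Finset.sum_congr rfl fun j _ => by ring
      have e2 : ∑ j ∈ univ.filter (fun j : Fin N => k ≤ j.1), (c - d j ^ 2) * (1 - p j)
          = c * (∑ j ∈ univ.filter (fun j : Fin N => k ≤ j.1), (1 - p j))
            - ((∑ j ∈ univ.filter (fun j : Fin N => k ≤ j.1), d j ^ 2)
              - ∑ j ∈ univ.filter (fun j : Fin N => k ≤ j.1), d j ^ 2 * p j) := by
        rw [Finset.mul_sum, ← Finset.sum_sub_distrib, ← Finset.sum_sub_distrib]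
        exact Finset.sum_congr rfl fun j _ => by ring
      rw [e1, e2, ← hps, hsplit (fun j => d j ^ 2 * p j)]
      ring
    have hterm1 : ∀ j ∈ univ.filter (fun j : Fin N => j.1 < k), 0 ≤ (d j ^ 2 - c) * p j := by
      intro j hj
      rw [Finset.mem_filter] at hj
      have hjκ : j < κ := hj.2
      have : c ≤ d j ^ 2 := by
        have := hdec j κ hjκ
        have := hd0 κ
        nlinarith
      exact mul_nonneg (by linarith) (h0 j)
    have hterm2 : ∀ j ∈ univ.filter (fun j : Fin N => k ≤ j.1), 0 ≤ (c - d j ^ 2) * (1 - p j) := by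
      intro j hj
      rw [Finset.mem_filter] at hj
      have hjκ : κ ≤ j := hj.2
      have : d j ^ 2 ≤ c := by
        rcases eq_or_lt_of_le hjκ with rfl | hlt
        · simp [hc]
        · have := hdec κ j hlt
          have := hd0 j
          nlinarith
      exact mul_nonneg (by linarith) (by linarith [h1 j])
    constructor
    · nlinarith [Finset.sum_nonneg hterm1, Finset.sum_nonneg hterm2]
    · intro heq
      have hzero : (∑ j ∈ univ.filter (fun j : Fin N => j.1 < k), (d j ^ 2 - c) * p j)
          + (∑ j ∈ univ.filter (fun j : Fin N => k ≤ j.1), (c - d j ^ 2) * (1 - p j)) = 0 := by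
        rw [← key]; linarith
      have hz1 : ∀ j ∈ univ.filter (fun j : Fin N => j.1 < k), (d j ^ 2 - c) * p j = 0 := by
        have := Finset.sum_nonneg hterm1
        have := Finset.sum_nonneg hterm2
        intro j hj
        refine (Finset.sum_eq_zero_iff_of_nonneg hterm1).1 (by linarith) j hj
      have hz2 : ∀ j ∈ univ.filter (fun j : Fin N => k ≤ j.1), (c - d j ^ 2) * (1 - p j) = 0 := by
        have := Finset.sum_nonneg hterm1
        have := Finset.sum_nonneg hterm2
        intro j hj
        refine (Finset.sum_eq_zero_iff_of_nonneg hterm2).1 (by linarith) j hj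
      -- p j = 0 for j < k
      have hplt : ∀ j : Fin N, j.1 < k → p j = 0 := by
        intro j hj
        have hjf : j ∈ univ.filter (fun j : Fin N => j.1 < k) := by simp [hj]
        have h := hz1 j hjf
        have hjκ : j < κ := hj
        have hstrict : c < d j ^ 2 := by
          have h1 := hdec j κ hjκ
          have h2 := hd0 κ
          nlinarith
        rcases mul_eq_zero.1 h with h' | h'
        · exact absurd h' (by nlinarith)
        · linarith
      have hpgt : ∀ j : Fin N, k < j.1 → p j = 1 := by
        intro j hj
        have hjf : j ∈ univ.filter (fun j : Fin N => k ≤ j.1) := by simp [le_of_lt hj]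
        have h := hz2 j hjf
        have hκj : κ < j := hj
        have hstrict : d j ^ 2 < c := by
          have h1 := hdec κ j hκj
          have h2 := hd0 j
          nlinarith
        rcases mul_eq_zero.1 h with h' | h'
        · exact absurd h' (by nlinarith)
        · linarith
      -- p κ = 1
      have hpκ : p κ = 1 := by
        have h3 := hsplit p
        rw [hsum] at h3
        have hs1 : (∑ j ∈ univ.filter (fun j : Fin N => j.1 < k), p j) = 0 :=
          Finset.sum_eq_zero fun j hj => hplt j (by simpa using (Finset.mem_filter.1 hj).2)
        have hκmem : κ ∈ univ.filter (fun j : Fin N => k ≤ j.1) := by simp; exact le_refl k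
        have hs2 : (∑ j ∈ univ.filter (fun j : Fin N => k ≤ j.1), p j)
            = p κ + ∑ j ∈ (univ.filter (fun j : Fin N => k ≤ j.1)).erase κ, p j :=
          (Finset.add_sum_erase _ p hκmem).symm
        have hs3 : (∑ j ∈ (univ.filter (fun j : Fin N => k ≤ j.1)).erase κ, p j)
            = ((univ.filter (fun j : Fin N => k ≤ j.1)).erase κ).card := by
          rw [Finset.sum_congr rfl (fun j hj => ?_), Finset.sum_const, nsmul_eq_mul, mul_one]
          rw [Finset.mem_erase, Finset.mem_filter] at hj
          refine hpgt j ?_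
          rcases Nat.lt_or_ge k j.1 with h | h
          · exact h
          · exact absurd (Fin.ext (le_antisymm h hj.2.2)) hj.1
        have hs4 : ((univ.filter (fun j : Fin N => k ≤ j.1)).erase κ).card = N - k - 1 := by
          rw [Finset.card_erase_of_mem hκmem, hcard2]
        rw [hs1, hs2, hs3, hs4] at h3
        have : (N - k : ℕ) = (N - k - 1 : ℕ) + 1 := by omega
        rw [this] at h3
        push_cast at h3
        linarith
      intro j
      rcases Nat.lt_trichotomy j.1 k with h | h | h
      · rw [if_pos h]; exact hplt j h
      · rw [if_neg (by omega)]
        have : j = κ := Fin.ext h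
        rw [this]; exact hpκ
      · rw [if_neg (by omega)]; exact hpgt j h

lemma proj_diag {P : Matrix (Fin N) (Fin N) ℂ} (hH : Pᴴ = P) (hI : P * P = P) (j : Fin N) :
    P j j = ((∑ l, Complex.normSq (P l j) : ℝ) : ℂ) := by
  have : P j j = (P * P) j j := by rw [hI]
  rw [this, Matrix.mul_apply]
  push_cast
  refine Finset.sum_congr rfl fun l _ => ?_
  have hPl : P j l = (starRingEnd ℂ) (P l j) := by
    conv_lhs => rw [← hH]
    rfl
  rw [hPl, Complex.normSq_eq_conj_mul_self]

lemma proj_diag_re_nonneg {P : Matrix (Fin N) (Fin N) ℂ} (hH : Pᴴ = P) (hI : P * P = P)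
    (j : Fin N) : 0 ≤ (P j j).re := by
  rw [proj_diag hH hI j]
  simpa using Finset.sum_nonneg fun l _ => Complex.normSq_nonneg (P l j)

lemma proj_col_zero {P : Matrix (Fin N) (Fin N) ℂ} (hH : Pᴴ = P) (hI : P * P = P)
    {j : Fin N} (hj : P j j = 0) (l : Fin N) : P l j = 0 := by
  have h := proj_diag hH hI j
  rw [hj] at h
  have h2 : (∑ l, Complex.normSq (P l j) : ℝ) = 0 := by
    have := h.symm
    exact_mod_cast this
  have := (Finset.sum_eq_zero_iff_of_nonneg
    (fun l _ => Complex.normSq_nonneg (P l j))).1 h2 l (Finset.mem_univ l)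
  exact Complex.normSq_eq_zero.1 this

lemma one_sub_proj {P : Matrix (Fin N) (Fin N) ℂ} (hH : Pᴴ = P) (hI : P * P = P) :
    ((1 : Matrix (Fin N) (Fin N) ℂ) - P)ᴴ = 1 - P ∧
    ((1 : Matrix (Fin N) (Fin N) ℂ) - P) * (1 - P) = 1 - P := by
  constructor
  · rw [Matrix.conjTranspose_sub, Matrix.conjTranspose_one, hH]
  · rw [Matrix.sub_mul, Matrix.one_mul, Matrix.mul_sub, Matrix.mul_one, hI]
    abel

lemma trace_proj (M Q : Matrix (Fin N) (Fin N) ℂ) (hH : Qᴴ = Q) (hI : Q * Q = Q) :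
    (Matrix.trace (Mᴴ * M * Q)).re = frobSq (M * Q) := by
  have h1 : (M * Q)ᴴ * (M * Q) = Q * (Mᴴ * M * Q) := by
    rw [Matrix.conjTranspose_mul, hH]
    simp only [Matrix.mul_assoc]
  unfold frobSq
  congr 1
  rw [h1, Matrix.trace_mul_comm Q (Mᴴ * M * Q), Matrix.mul_assoc (Mᴴ * M) Q Q, hI]

lemma diag_EY (k : ℕ) (hk : k ≤ N) (d : Fin N → ℝ) (hd0 : ∀ j, 0 ≤ d j)
    (hdec : ∀ i j : Fin N, i < j → d j < d i)
    (G : Matrix (Fin N) (Fin N) ℂ) (hG : G.rank ≤ k) :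
    (∑ j ∈ univ.filter (fun j : Fin N => k ≤ j.1), d j ^ 2)
      ≤ frobSq (Matrix.diagonal (fun j => (d j : ℂ)) - G) ∧
    ((∑ j ∈ univ.filter (fun j : Fin N => k ≤ j.1), d j ^ 2)
      = frobSq (Matrix.diagonal (fun j => (d j : ℂ)) - G) →
      G = Matrix.diagonal (fun j => if j.1 < k then (d j : ℂ) else 0)) := by
  classical
  obtain ⟨P, hH, hI, hGP, htr⟩ := exists_proj k hk G hG
  obtain ⟨hQH, hQI⟩ := one_sub_proj hH hI
  set D : Matrix (Fin N) (Fin N) ℂ := Matrix.diagonal (fun j => (d j : ℂ)) with hD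
  set M : Matrix (Fin N) (Fin N) ℂ := D - G with hM
  set p : Fin N → ℝ := fun j => (P j j).re with hp
  -- decomposition
  have hMP : M * P = D * P := by
    rw [hM, Matrix.sub_mul, hGP, sub_zero]
  have hDHD : Dᴴ * D = Matrix.diagonal (fun j => ((d j ^ 2 : ℝ) : ℂ)) := by
    rw [hD, Matrix.diagonal_conjTranspose, Matrix.diagonal_mul_diagonal]
    congr 1
    funext j
    simp [Complex.conj_ofReal]
    push_cast
    ring
  have hfrDP : frobSq (M * P) = ∑ j, d j ^ 2 * p j := by
    rw [hMP, ← trace_proj D P hH hI, hDHD]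
    rw [Matrix.trace]
    rw [Complex.re_sum]
    refine Finset.sum_congr rfl fun j _ => ?_
    rw [Matrix.diag_apply, Matrix.diagonal_mul]
    simp [Complex.mul_re, hp, ← Complex.ofReal_pow]
  have hdecomp : frobSq M = (∑ j, d j ^ 2 * p j) + frobSq (M * (1 - P)) := by
    have hsplit : Mᴴ * M = Mᴴ * M * P + Mᴴ * M * (1 - P) := by
      noncomm_ring
    have : frobSq M = (Matrix.trace (Mᴴ * M * P)).re + (Matrix.trace (Mᴴ * M * (1 - P))).re := by
      unfold frobSq
      rw [← Complex.add_re, ← Matrix.trace_add, ← hsplit]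
    rw [this, trace_proj M P hH hI, trace_proj M (1 - P) hQH hQI, hfrDP]
  -- constraints on p
  have h0 : ∀ j, 0 ≤ p j := fun j => proj_diag_re_nonneg hH hI j
  have h1 : ∀ j, p j ≤ 1 := by
    intro j
    have := proj_diag_re_nonneg hQH hQI j
    have hone : ((1 : Matrix (Fin N) (Fin N) ℂ) - P) j j = 1 - P j j := by
      simp [Matrix.one_apply_eq]
    rw [hone] at this
    simp only [Complex.sub_re, Complex.one_re] at this
    linarith
  have hsum : ∑ j, p j = ((N - k : ℕ) : ℝ) := by
    have : (Matrix.trace P).re = ((N - k : ℕ) : ℝ) := by rw [htr]; simp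
    rw [← this, Matrix.trace, Complex.re_sum]
    rfl
  obtain ⟨hineq, hcrit⟩ := weight_ineq k hk d hd0 hdec p h0 h1 hsum
  constructor
  · rw [hdecomp]
    have := frobSq_nonneg (M * (1 - P))
    linarith
  · intro heq
    have hfr0 : frobSq (M * (1 - P)) = 0 := by
      rw [hdecomp] at heq
      have := frobSq_nonneg (M * (1 - P))
      linarith
    have hpeq : ∑ j ∈ univ.filter (fun j : Fin N => k ≤ j.1), d j ^ 2 = ∑ j, d j ^ 2 * p j := by
      rw [hdecomp, hfr0, add_zero] at heq
      exact heq
    have hpval := hcrit hpeq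
    have hM0 : M * (1 - P) = 0 := (frobSq_eq_zero_iff _).1 hfr0
    -- P j j values
    have hPreal : ∀ j, P j j = ((p j : ℝ) : ℂ) := by
      intro j
      have h2 := proj_diag hH hI j
      refine Complex.ext ?_ ?_
      · simp [hp]
      · rw [h2]; simp
    set E : Matrix (Fin N) (Fin N) ℂ :=
      Matrix.diagonal (fun j : Fin N => if j.1 < k then (1 : ℂ) else 0) with hE
    set Q : Matrix (Fin N) (Fin N) ℂ := 1 - P with hQ
    have hQdiag : ∀ j : Fin N, k ≤ j.1 → Q j j = 0 := by
      intro j hj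
      rw [hQ, Matrix.sub_apply, Matrix.one_apply_eq, hPreal j, hpval j, if_neg (by omega)]
      simp
    have hQcol : ∀ j : Fin N, k ≤ j.1 → ∀ l, Q l j = 0 := by
      intro j hj l
      exact proj_col_zero hQH hQI (hQdiag j hj) l
    have hQrow : ∀ j : Fin N, k ≤ j.1 → ∀ l, Q j l = 0 := by
      intro j hj l
      have : Q j l = (starRingEnd ℂ) (Q l j) := by
        nth_rewrite 1 [← hQH]
        rfl
      rw [this, hQcol j hj l, map_zero]
    have hEH : Eᴴ = E := by
      rw [hE, Matrix.diagonal_conjTranspose]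
      refine congrArg Matrix.diagonal (funext fun j => ?_)
      simp only [Pi.star_apply]
      split_ifs <;> simp
    have hEE : E * E = E := by
      rw [hE, Matrix.diagonal_mul_diagonal]
      refine congrArg Matrix.diagonal (funext fun j => ?_)
      split_ifs <;> simp
    have hEQ : E * Q = Q := by
      ext j l
      rw [hE, Matrix.diagonal_mul]
      by_cases hj : j.1 < k
      · rw [if_pos hj, one_mul]
      · rw [if_neg hj, zero_mul, hQrow j (by omega) l]
    have hQE : Q * E = Q := by
      ext j l
      rw [hE, Matrix.mul_diagonal]
      by_cases hl : l.1 < k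
      · rw [if_pos hl, mul_one]
      · rw [if_neg hl, mul_zero, hQcol l (by omega) j]
    have hXH : (E - Q)ᴴ = E - Q := by rw [Matrix.conjTranspose_sub, hEH, hQH]
    have hXI : (E - Q) * (E - Q) = E - Q := by
      calc (E - Q) * (E - Q) = E * E - E * Q - Q * E + Q * Q := by noncomm_ring
        _ = E - Q := by rw [hEE, hEQ, hQE, hQI]; abel
    have hXdiag : ∀ j : Fin N, (E - Q) j j = 0 := by
      intro j
      rw [Matrix.sub_apply, hE, Matrix.diagonal_apply_eq]
      by_cases hj : j.1 < k
      · rw [if_pos hj, hQ, Matrix.sub_apply, Matrix.one_apply_eq, hPreal j, hpval j, if_pos hj]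
        simp
      · rw [if_neg hj, hQdiag j (by omega)]
        simp
    have hQeqE : Q = E := by
      have hX0 : E - Q = 0 := by
        ext l j
        rw [Matrix.zero_apply]
        exact proj_col_zero hXH hXI (hXdiag j) l
      have := sub_eq_zero.1 hX0
      exact this.symm
    -- conclude
    have hGE : G * E = D * E := by
      have : (D - G) * Q = 0 := hM0
      rw [hQeqE, Matrix.sub_mul, sub_eq_zero] at this
      exact this.symm
    have hPE : P = 1 - E := by
      rw [← hQeqE, hQ]; abel
    have hGfull : G = G * E := by
      have h2 : G * (1 - E) = 0 := by rw [← hPE]; exact hGP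
      rw [Matrix.mul_sub, Matrix.mul_one, sub_eq_zero] at h2
      exact h2
    rw [hGfull, hGE, hD, hE, Matrix.diagonal_mul_diagonal]
    refine congrArg Matrix.diagonal (funext fun j => ?_)
    split_ifs <;> simp

lemma wnorm_eq_frob (w : Fin N → ℝ) (hw : ∀ i, 0 < w i) (Y : Matrix (Fin N) (Fin N) ℂ) :
    wnormSq w Y = frobSq (Matrix.diagonal (fun i => (Real.sqrt (w i) : ℂ)) * Y *
      Matrix.diagonal (fun i => (Real.sqrt (w i) : ℂ))) := by
  rw [wnormSq, frobSq_eq_sum, Finset.sum_comm]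
  refine Finset.sum_congr rfl fun j _ => Finset.sum_congr rfl fun l _ => ?_
  rw [Matrix.mul_diagonal, Matrix.diagonal_mul]
  rw [Complex.normSq_mul, Complex.normSq_mul]
  rw [Complex.normSq_ofReal, Complex.normSq_ofReal]
  rw [Complex.sq_norm]
  have hwj : Real.sqrt (w j) * Real.sqrt (w j) = w j := Real.mul_self_sqrt (hw j).le
  have hwl : Real.sqrt (w l) * Real.sqrt (w l) = w l := Real.mul_self_sqrt (hw l).le
  rw [hwj, hwl]


/-- Weighted Eckart–Young via Takagi factorization: the truncated Takagi
factorization of `B = diag(√w) A diag(√w)`, with con-eigenvectors rescaled by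
`1/√w`, is the unique best rank-`k` approximation of `A` in the weighted
Frobenius norm. -/
theorem weighted_eckart_young (N k : ℕ) (hk : k ≤ N)
    (w : Fin N → ℝ) (hw : ∀ i, 0 < w i)
    (A B : Matrix (Fin N) (Fin N) ℂ)
    (hB : B = Matrix.diagonal (fun i => (Real.sqrt (w i) : ℂ)) * A *
              Matrix.diagonal (fun i => (Real.sqrt (w i) : ℂ)))
    (s : Fin N → ℝ) (q : Fin N → Fin N → ℂ)
    (hs : ∀ i, 0 ≤ s i)
    (hdist : ∀ i j : Fin N, i < j → s j < s i)
    (horth : ∀ i j, dotProduct (star (q i)) (q j) = if i = j then 1 else 0)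
    (hTak : B = ∑ m, (s m : ℂ) • Matrix.vecMulVec (star (q m)) (star (q m)))
    (u : Fin N → Fin N → ℂ) (hu : ∀ m l, u m l = q m l / (Real.sqrt (w l) : ℂ))
    (R : Matrix (Fin N) (Fin N) ℂ)
    (hR : R = ∑ m ∈ Finset.univ.filter (fun m : Fin N => m.1 < k),
        (s m : ℂ) • Matrix.vecMulVec (star (u m)) (star (u m))) :
    ∀ R' : Matrix (Fin N) (Fin N) ℂ, R'.rank ≤ k →
      wnormSq w (A - R) ≤ wnormSq w (A - R') ∧
      (wnormSq w (A - R) = wnormSq w (A - R') → R' = R) := by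
  classical
  intro R' hR'
  have hsqrt : ∀ i, (Real.sqrt (w i) : ℂ) ≠ 0 := by
    intro i
    simp only [ne_eq, Complex.ofReal_eq_zero]
    exact (Real.sqrt_pos.2 (hw i)).ne'
  set S : Matrix (Fin N) (Fin N) ℂ :=
    Matrix.diagonal (fun i => (Real.sqrt (w i) : ℂ)) with hS
  set T : Matrix (Fin N) (Fin N) ℂ :=
    Matrix.diagonal (fun i => ((Real.sqrt (w i) : ℂ))⁻¹) with hT
  have hTS : T * S = 1 := by
    rw [hT, hS, Matrix.diagonal_mul_diagonal, ← Matrix.diagonal_one]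
    refine congrArg Matrix.diagonal (funext fun i => ?_)
    exact inv_mul_cancel₀ (hsqrt i)
  have hST : S * T = 1 := by
    rw [hT, hS, Matrix.diagonal_mul_diagonal, ← Matrix.diagonal_one]
    refine congrArg Matrix.diagonal (funext fun i => ?_)
    exact mul_inv_cancel₀ (hsqrt i)
  set V : Matrix (Fin N) (Fin N) ℂ := fun j m => (starRingEnd ℂ) (q m j) with hV
  set Vc : Matrix (Fin N) (Fin N) ℂ := fun j m => q m j with hVc
  have horth' : ∀ i j : Fin N, (∑ l, (starRingEnd ℂ) (q i l) * q j l)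
      = if i = j then 1 else 0 := by
    intro i j
    have := horth i j
    simpa [dotProduct] using this
  have hVV : Vᴴ * V = 1 := by
    ext i j
    rw [Matrix.mul_apply, Matrix.one_apply]
    have : ∀ l, Vᴴ i l * V l j = (starRingEnd ℂ) ((starRingEnd ℂ) (q i l) * q j l) := by
      intro l
      rw [Matrix.conjTranspose_apply]
      simp only [hV, Complex.star_def, _root_.map_mul,
        Complex.conj_conj]
    rw [Finset.sum_congr rfl fun l _ => this l, ← map_sum, horth' i j]
    split_ifs <;> simp
  have hVVH : V * Vᴴ = 1 := mul_eq_one_comm.1 hVV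
  have hVcVcH : Vc * Vcᴴ = 1 := by
    ext j l
    have h := congrFun (congrFun hVVH j) l
    have : (Vc * Vcᴴ) j l = (starRingEnd ℂ) ((V * Vᴴ) j l) := by
      rw [Matrix.mul_apply, Matrix.mul_apply, map_sum]
      refine Finset.sum_congr rfl fun m _ => ?_
      simp only [Matrix.conjTranspose_apply]
      simp only [hV, hVc, Complex.star_def, _root_.map_mul,
        Complex.conj_conj]
    rw [this, h]
    rw [Matrix.one_apply]
    split_ifs <;> simp [Matrix.one_apply]
  -- key computation: outer-sum times Vc
  have houter : ∀ f : Fin N → ℂ,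
      (∑ m, f m • Matrix.vecMulVec (star (q m)) (star (q m))) * Vc
        = V * Matrix.diagonal f := by
    intro f
    ext j i
    rw [Matrix.mul_diagonal, Matrix.sum_mul, Matrix.sum_apply]
    have hterm : ∀ m, ((f m • Matrix.vecMulVec (star (q m)) (star (q m))) * Vc) j i
        = (f m * (starRingEnd ℂ) (q m j)) * ∑ l, (starRingEnd ℂ) (q m l) * q i l := by
      intro m
      rw [Matrix.smul_mul, Matrix.smul_apply, Matrix.mul_apply, Finset.mul_sum, smul_eq_mul,
        Finset.mul_sum]
      refine Finset.sum_congr rfl fun l _ => ?_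
      rw [Matrix.vecMulVec_apply, hVc]
      simp only [Pi.star_apply, Complex.star_def]
      ring
    rw [Finset.sum_congr rfl fun m _ => hterm m]
    rw [Finset.sum_congr rfl fun m _ => by rw [horth' m i]]
    rw [Finset.sum_eq_single i]
    · rw [if_pos rfl, mul_one, hV]; ring
    · intro m _ hm
      rw [if_neg hm, mul_zero]
    · intro h; exact absurd (Finset.mem_univ i) h
  set D : Matrix (Fin N) (Fin N) ℂ := Matrix.diagonal (fun j => (s j : ℂ)) with hD
  set Dk : Matrix (Fin N) (Fin N) ℂ :=
    Matrix.diagonal (fun j : Fin N => if j.1 < k then (s j : ℂ) else 0) with hDk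
  have hBD : Vᴴ * B * Vc = D := by
    rw [Matrix.mul_assoc, hTak, houter (fun m => (s m : ℂ)), ← Matrix.mul_assoc, hVV,
      Matrix.one_mul]
  -- S R S
  have hSRS : S * R * S = ∑ m, (if m.1 < k then (s m : ℂ) else 0) •
      Matrix.vecMulVec (star (q m)) (star (q m)) := by
    rw [hR, Finset.mul_sum, Finset.sum_mul]
    rw [show (∑ m : Fin N, (if (m : ℕ) < k then (s m : ℂ) else 0) •
          Matrix.vecMulVec (star (q m)) (star (q m)))
        = ∑ m ∈ Finset.univ.filter (fun m : Fin N => m.1 < k),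
            (s m : ℂ) • Matrix.vecMulVec (star (q m)) (star (q m)) from by
      rw [Finset.sum_filter]
      refine Finset.sum_congr rfl fun m _ => ?_
      split_ifs <;> simp]
    refine Finset.sum_congr rfl fun m hm => ?_
    rw [Matrix.mul_smul, Matrix.smul_mul]
    congr 1
    ext j l
    rw [hS, Matrix.mul_diagonal, Matrix.diagonal_mul]
    rw [Matrix.vecMulVec_apply, Matrix.vecMulVec_apply]
    simp only [Pi.star_apply, hu]
    rw [star_div₀, star_div₀]
    have hrj : star ((Real.sqrt (w j) : ℂ)) = (Real.sqrt (w j) : ℂ) := by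
      rw [Complex.star_def, Complex.conj_ofReal]
    have hrl : star ((Real.sqrt (w l) : ℂ)) = (Real.sqrt (w l) : ℂ) := by
      rw [Complex.star_def, Complex.conj_ofReal]
    rw [hrj, hrl]
    have hij := hsqrt j
    have hil := hsqrt l
    field_simp
  have hRDk : Vᴴ * (S * R * S) * Vc = Dk := by
    rw [Matrix.mul_assoc, hSRS, houter (fun m => if m.1 < k then (s m : ℂ) else 0),
      ← Matrix.mul_assoc, hVV, Matrix.one_mul, hDk]
  -- weighted norm identities
  have hwn : ∀ X : Matrix (Fin N) (Fin N) ℂ,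
      wnormSq w (A - X) = frobSq (D - Vᴴ * (S * X * S) * Vc) := by
    intro X
    rw [wnorm_eq_frob w hw (A - X)]
    have h1 : S * (A - X) * S = B - S * X * S := by
      rw [hB]; noncomm_ring
    have hVH : (Vᴴ)ᴴ * Vᴴ = 1 := by rwa [Matrix.conjTranspose_conjTranspose]
    have h2 : frobSq (S * (A - X) * S) = frobSq (Vᴴ * (S * (A - X) * S) * Vc) := by
      rw [frobSq_unitary_right hVcVcH, frobSq_unitary_left hVH]
    rw [← hS, h2, h1, Matrix.mul_sub, Matrix.sub_mul, hBD]
  -- apply diagonal Eckart-Young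
  set G : Matrix (Fin N) (Fin N) ℂ := Vᴴ * (S * R' * S) * Vc with hG
  have hGrank : G.rank ≤ k := by
    have e1 : G = (Vᴴ * S) * (R' * (S * Vc)) := by
      rw [hG]; simp only [Matrix.mul_assoc]
    rw [e1]
    refine le_trans (le_trans (Matrix.rank_mul_le_right _ _) (Matrix.rank_mul_le_left _ _)) hR'
  obtain ⟨hineq, huniq⟩ := diag_EY k hk s hs hdist G hGrank
  have hsum_eq : wnormSq w (A - R)
      = ∑ j ∈ Finset.univ.filter (fun j : Fin N => k ≤ j.1), s j ^ 2 := by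
    rw [hwn R, hRDk]
    have hDDk : D - Dk = Matrix.diagonal (fun j : Fin N => if j.1 < k then 0 else (s j : ℂ)) := by
      rw [hD, hDk, Matrix.diagonal_sub]
      refine congrArg Matrix.diagonal (funext fun j => ?_)
      split_ifs <;> simp
    rw [hDDk, frobSq_eq_sum, Finset.sum_filter]
    refine Finset.sum_congr rfl fun l _ => ?_
    rw [Finset.sum_eq_single l]
    · rw [Matrix.diagonal_apply_eq]
      by_cases hcond : l.1 < k
      · rw [if_pos hcond, if_neg (by omega)]
        simp
      · rw [if_neg hcond, if_pos (by omega), Complex.normSq_ofReal]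
        ring
    · intro j _ hj
      rw [Matrix.diagonal_apply_ne _ hj]
      simp
    · intro h; exact absurd (Finset.mem_univ l) h
  constructor
  · rw [hsum_eq, hwn R']
    exact hineq
  · intro heq
    rw [hsum_eq, hwn R'] at heq
    have hGDk : G = Dk := by
      have := huniq heq
      rw [this, hDk]
    have hcancel : S * R' * S = S * R * S := by
      have h1 : Vᴴ * (S * R' * S) * Vc = Vᴴ * (S * R * S) * Vc := by rw [← hG, hGDk, hRDk]
      have h2 := congrArg (fun X => V * X * Vcᴴ) h1
      calc S * R' * S = (V * Vᴴ) * (S * R' * S) * (Vc * Vcᴴ) := by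
            rw [hVVH, hVcVcH, Matrix.one_mul, Matrix.mul_one]
        _ = (V * (Vᴴ * (S * R' * S) * Vc)) * Vcᴴ := by simp only [Matrix.mul_assoc]
        _ = (V * (Vᴴ * (S * R * S) * Vc)) * Vcᴴ := by rw [h1]
        _ = (V * Vᴴ) * (S * R * S) * (Vc * Vcᴴ) := by simp only [Matrix.mul_assoc]
        _ = S * R * S := by rw [hVVH, hVcVcH, Matrix.one_mul, Matrix.mul_one]
    have h3 := congrArg (fun X => T * X * T) hcancel
    calc R' = (T * S) * R' * (S * T) := by rw [hTS, hST, Matrix.one_mul, Matrix.mul_one]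
      _ = T * (S * R' * S) * T := by simp only [Matrix.mul_assoc]
      _ = T * (S * R * S) * T := by rw [hcancel]
      _ = (T * S) * R * (S * T) := by simp only [Matrix.mul_assoc]
      _ = R := by rw [hTS, hST, Matrix.one_mul, Matrix.mul_one]
end

section
/- Let w be a positive weight and ω the induced anti-diagonal weight. For any f ∈ ℂ^{2N−1} and any set S of N×N Hankel matrices, a Hankel matrix H̃ ∈ S minimizes ‖Hf − H̃‖_w if and only if g = H*(H̃) minimizes ‖f − g‖_{ℓ²(ω)} over H*(S), and in that case H g = H̃. -/
def hankelOf (N : ℕ) (f : Fin (2 * N - 1) → ℂ) : Matrix (Fin N) (Fin N) ℂ :=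
  Matrix.of fun j l => f ⟨j.1 + l.1, by have := j.isLt; have := l.isLt; omega⟩

def antidiagWeight (N : ℕ) (w : Fin N → ℝ) (m : ℕ) : ℝ :=
  ∑ j : Fin N, ∑ l : Fin N, if j.1 + l.1 = m then w j * w l else 0

noncomputable def hankelAdj (N : ℕ) (w : Fin N → ℝ) (A : Matrix (Fin N) (Fin N) ℂ) :
    Fin (2 * N - 1) → ℂ :=
  fun m => ((antidiagWeight N w m.1 : ℝ) : ℂ)⁻¹ *
    ∑ j : Fin N, ∑ l : Fin N,
      if j.1 + l.1 = m.1 then (w j : ℂ) * A j l * (w l : ℂ) else 0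

noncomputable def wFrobSq (N : ℕ) (w : Fin N → ℝ) (A : Matrix (Fin N) (Fin N) ℂ) : ℝ :=
  ∑ j, ∑ l, w j * ‖A j l‖ ^ 2 * w l

noncomputable def omegaNormSq (N : ℕ) (w : Fin N → ℝ) (f : Fin (2 * N - 1) → ℂ) : ℝ :=
  ∑ m, ‖f m‖ ^ 2 * antidiagWeight N w m.1

lemma antidiagWeight_pos (N : ℕ) (w : Fin N → ℝ) (hw : ∀ i, 0 < w i)
    (j₀ l₀ : Fin N) : 0 < antidiagWeight N w (j₀.1 + l₀.1) := by
  unfold antidiagWeight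
  have h1 : ∀ j : Fin N, 0 ≤ ∑ l : Fin N, (if j.1 + l.1 = j₀.1 + l₀.1 then w j * w l else 0) := by
    intro j
    apply Finset.sum_nonneg
    intro l _
    split
    · exact le_of_lt (mul_pos (hw j) (hw l))
    · exact le_refl 0
  apply Finset.sum_pos' (fun j _ => h1 j)
  refine ⟨j₀, Finset.mem_univ _, ?_⟩
  apply Finset.sum_pos'
  · intro l _
    split
    · exact le_of_lt (mul_pos (hw j₀) (hw l))
    · exact le_refl 0
  · exact ⟨l₀, Finset.mem_univ _, by simp [mul_pos (hw j₀) (hw l₀)]⟩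

lemma hankelAdj_apply (N : ℕ) (w : Fin N → ℝ) (hw : ∀ i, 0 < w i)
    (A : Matrix (Fin N) (Fin N) ℂ)
    (hA : ∀ j l j' l' : Fin N, j.1 + l.1 = j'.1 + l'.1 → A j l = A j' l')
    (m : Fin (2 * N - 1)) (j l : Fin N) (h : j.1 + l.1 = m.1) :
    hankelAdj N w A m = A j l := by
  have hpos : 0 < antidiagWeight N w m.1 := h ▸ antidiagWeight_pos N w hw j l
  have hsum : (∑ j' : Fin N, ∑ l' : Fin N,
      if j'.1 + l'.1 = m.1 then (w j' : ℂ) * A j' l' * (w l' : ℂ) else 0)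
      = ((antidiagWeight N w m.1 : ℝ) : ℂ) * A j l := by
    unfold antidiagWeight
    push_cast
    rw [Finset.sum_mul]
    apply Finset.sum_congr rfl
    intro j' _
    rw [Finset.sum_mul]
    apply Finset.sum_congr rfl
    intro l' _
    by_cases hc : j'.1 + l'.1 = m.1
    · rw [if_pos hc, if_pos hc, hA j' l' j l (by omega)]; push_cast; ring
    · rw [if_neg hc, if_neg hc]; simp
  unfold hankelAdj
  rw [hsum, ← mul_assoc, inv_mul_cancel₀ (by exact_mod_cast ne_of_gt hpos), one_mul]

lemma hankelOf_hankelAdj (N : ℕ) (w : Fin N → ℝ) (hw : ∀ i, 0 < w i)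
    (A : Matrix (Fin N) (Fin N) ℂ)
    (hA : ∀ j l j' l' : Fin N, j.1 + l.1 = j'.1 + l'.1 → A j l = A j' l') :
    hankelOf N (hankelAdj N w A) = A := by
  ext j l
  exact hankelAdj_apply N w hw A hA _ j l rfl

lemma wFrobSq_eq (N : ℕ) (w : Fin N → ℝ) (hw : ∀ i, 0 < w i)
    (f : Fin (2 * N - 1) → ℂ) (A : Matrix (Fin N) (Fin N) ℂ)
    (hA : ∀ j l j' l' : Fin N, j.1 + l.1 = j'.1 + l'.1 → A j l = A j' l') :
    wFrobSq N w (hankelOf N f - A) = omegaNormSq N w (f - hankelAdj N w A) := by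
  unfold omegaNormSq antidiagWeight wFrobSq
  simp only [Finset.mul_sum, Pi.sub_apply, Matrix.sub_apply]
  conv_rhs => rw [Finset.sum_comm]
  apply Finset.sum_congr rfl
  intro j _
  conv_rhs => rw [Finset.sum_comm]
  apply Finset.sum_congr rfl
  intro l _
  have hlt : j.1 + l.1 < 2 * N - 1 := by have := j.isLt; have := l.isLt; omega
  set m0 : Fin (2 * N - 1) := ⟨j.1 + l.1, hlt⟩ with hm0
  rw [Finset.sum_eq_single m0]
  · rw [if_pos rfl, hankelAdj_apply N w hw A hA m0 j l rfl]
    have : (hankelOf N f) j l = f m0 := rfl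
    rw [this]
    ring
  · intro m _ hm
    rw [if_neg]
    · ring
    · intro hc
      exact hm (Fin.ext hc.symm)
  · intro h
    exact absurd (Finset.mem_univ m0) h

/-- Minimizing `‖Hf − H̃‖_w` over a set `S` of Hankel matrices is equivalent to
minimizing `‖f − g‖_{ℓ²(ω)}` over `g ∈ H*(S)`, and the solutions are related by
`H(H* H̃) = H̃`. -/
theorem hankel_minimization_equivalence (N : ℕ) (w : Fin N → ℝ) (hw : ∀ i, 0 < w i)
    (f : Fin (2 * N - 1) → ℂ) (S : Set (Matrix (Fin N) (Fin N) ℂ))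
    (hS : ∀ A ∈ S, ∀ j l j' l' : Fin N, j.1 + l.1 = j'.1 + l'.1 → A j l = A j' l')
    (Ht : Matrix (Fin N) (Fin N) ℂ) (hHt : Ht ∈ S) :
    ((∀ A ∈ S, wFrobSq N w (hankelOf N f - Ht) ≤ wFrobSq N w (hankelOf N f - A)) ↔
      (∀ g ∈ hankelAdj N w '' S,
        omegaNormSq N w (f - hankelAdj N w Ht) ≤ omegaNormSq N w (f - g))) ∧
    hankelOf N (hankelAdj N w Ht) = Ht := by
  constructor
  · constructor
    · rintro h g ⟨A, hA, rfl⟩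
      rw [← wFrobSq_eq N w hw f Ht (hS Ht hHt), ← wFrobSq_eq N w hw f A (hS A hA)]
      exact h A hA
    · intro h A hA
      rw [wFrobSq_eq N w hw f Ht (hS Ht hHt), wFrobSq_eq N w hw f A (hS A hA)]
      exact h _ ⟨A, hA, rfl⟩
  · exact hankelOf_hankelAdj N w hw Ht (hS Ht hHt)
end

section
/- Let A = Hf be an infinite Hankel matrix (A(j,l) = f(j+l), indices in ℕ) of finite rank. If r is the smallest index such that column A(·,r) is a linear combination of the columns A(·,0),…,A(·,r−1), say A(·,r) = −Σ_{l=0}^{r−1} λ_l A(·,l), then f satisfies the linear recursion f(k) + Σ_{l=0}^{r−1} λ_l f(k−r+l) = 0 for all k ≥ r, and consequently rank A = r. -/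
/-- If the `r`-th column of an infinite Hankel matrix `Hf` is the first one that is a
linear combination of the preceding columns, say with coefficients `-λ_l`, then `f`
satisfies the corresponding linear recursion for all `k ≥ r`, and the rank of `Hf`
(the dimension of its column space) equals `r`. -/
theorem infinite_hankel_recursion_and_rank (f : ℕ → ℂ) (r : ℕ) (lam : ℕ → ℂ)
    (col : ℕ → ℕ → ℂ) (hcol : col = fun l j => f (j + l))
    (hfin : FiniteDimensional ℂ (Submodule.span ℂ (Set.range col)))
    (hmin : ∀ r' < r, col r' ∉ Submodule.span ℂ (col '' Set.Iio r'))
    (hdep : ∀ j : ℕ, f (j + r) + ∑ l ∈ Finset.range r, lam l * f (j + l) = 0) :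
    (∀ k, r ≤ k → f k + ∑ l ∈ Finset.range r, lam l * f (k - r + l) = 0) ∧
    Module.finrank ℂ (Submodule.span ℂ (Set.range col)) = r := by
  constructor
  · intro k hk
    have := hdep (k - r)
    rwa [Nat.sub_add_cancel hk] at this
  · -- every column lies in the span of the first r columns
    have hmem : ∀ n, col n ∈ Submodule.span ℂ (col '' Set.Iio r) := by
      intro n
      induction n using Nat.strong_induction_on with
      | _ n ih =>
        rcases lt_or_ge n r with h | h
        · exact Submodule.subset_span ⟨n, h, rfl⟩
        · obtain ⟨m, rfl⟩ := Nat.exists_eq_add_of_le h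
          have hexp : col (r + m) = -∑ l ∈ Finset.range r, lam l • col (l + m) := by
            funext j
            have := hdep (j + m)
            simp only [hcol, Pi.neg_apply, Finset.sum_apply, Pi.smul_apply, smul_eq_mul]
            have h1 : j + (r + m) = j + m + r := by ring
            have h2 : ∀ l, j + (l + m) = j + m + l := by intro l; ring
            rw [h1]
            simp only [h2]
            linear_combination this
          rw [hexp]
          refine neg_mem (Submodule.sum_mem _ fun l hl => Submodule.smul_mem _ _ (ih (l + m) ?_))
          have := Finset.mem_range.mp hl
          omega
    have hspan : Submodule.span ℂ (Set.range col) = Submodule.span ℂ (col '' Set.Iio r) := by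
      apply le_antisymm
      · rw [Submodule.span_le]
        rintro _ ⟨n, rfl⟩
        exact hmem n
      · exact Submodule.span_mono (Set.image_subset_range _ _)
    -- the first r columns are linearly independent
    have hrange : Set.range (fun i : Fin r => col i) = col '' Set.Iio r := by
      ext x
      constructor
      · rintro ⟨i, rfl⟩; exact ⟨i, i.isLt, rfl⟩
      · rintro ⟨n, hn, rfl⟩; exact ⟨⟨n, hn⟩, rfl⟩
    have hli : ∀ n ≤ r, LinearIndependent ℂ (fun i : Fin n => col i) := by
      intro n
      induction n with
      | zero => intro _; exact linearIndependent_empty_type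
      | succ n ih =>
        intro hn
        have heq : (fun i : Fin (n + 1) => col i) =
            Fin.snoc (fun i : Fin n => col i) (col n) := by
          funext i
          induction i using Fin.lastCases with
          | last => simp
          | cast i => simp [Fin.snoc_castSucc]
        rw [heq, linearIndependent_fin_snoc]
        refine ⟨ih (Nat.le_of_succ_le hn), ?_⟩
        have : Set.range (fun i : Fin n => col i) = col '' Set.Iio n := by
          ext x
          constructor
          · rintro ⟨i, rfl⟩; exact ⟨i, i.isLt, rfl⟩
          · rintro ⟨m, hm, rfl⟩; exact ⟨⟨m, hm⟩, rfl⟩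
        rw [this]
        exact hmin n hn
    rw [hspan, ← hrange, finrank_span_eq_card (hli r le_rfl), Fintype.card_fin]
end

section
/- If A is an infinite Hankel matrix of finite rank r, then the r×r upper-left corner submatrix (A(j,l))_{0≤j,l≤r−1} is nonsingular. -/
open Submodule Set Module

/-- The shift operator on sequences. -/
noncomputable def shiftL : (ℕ → ℂ) →ₗ[ℂ] (ℕ → ℂ) where
  toFun u := fun j => u (j + 1)
  map_add' u v := rfl
  map_smul' c u := rfl

/-- finrank of span of a `Fin k`-indexed family is at most `k`. -/
lemma finrank_span_fin_le {k : ℕ} (v : Fin k → (ℕ → ℂ)) :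
    finrank ℂ (span ℂ (Set.range v)) ≤ k := by
  classical
  haveI : Fintype (Set.range v) := (Set.finite_range v).fintype
  refine (finrank_span_le_card _).trans ?_
  calc (Set.range v).toFinset.card = Fintype.card (Set.range v) := Set.toFinset_card _
    _ ≤ Fintype.card (Fin k) := Fintype.card_range_le v
    _ = k := Fintype.card_fin k

/-- The upper-left `r × r` corner of an infinite Hankel matrix of finite rank `r`
is nonsingular. -/
theorem infinite_hankel_corner_nonsingular (f : ℕ → ℂ) (r : ℕ)
    (col : ℕ → ℕ → ℂ) (hcol : col = fun l j => f (j + l))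
    (hfin : FiniteDimensional ℂ (Submodule.span ℂ (Set.range col)))
    (hrank : Module.finrank ℂ (Submodule.span ℂ (Set.range col)) = r) :
    (Matrix.of fun j l : Fin r => f (j.1 + l.1)).det ≠ 0 := by
  classical
  set W := Submodule.span ℂ (Set.range col) with hW
  -- The subspaces spanned by the first k columns
  set F : ℕ → Submodule ℂ (ℕ → ℂ) :=
    fun k => span ℂ (Set.range fun i : Fin k => col i.1) with hF
  have hshift : ∀ l, shiftL (col l) = col (l + 1) := by
    intro l
    funext j
    simp only [shiftL, hcol, LinearMap.coe_mk, AddHom.coe_mk]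
    congr 1
    omega
  have hFmem : ∀ {l k : ℕ}, l < k → col l ∈ F k := by
    intro l k hlk
    exact subset_span ⟨⟨l, hlk⟩, rfl⟩
  haveI : ∀ k, Module.Finite ℂ (F k) := fun k =>
    FiniteDimensional.span_of_finite ℂ (Set.finite_range _)
  -- Lemma A: if col k ∈ F k, then every column is in F k
  have lemA : ∀ k : ℕ, col k ∈ F k → ∀ m, col m ∈ F k := by
    intro k hk
    have hmap : ∀ u ∈ F k, shiftL u ∈ F k := by
      intro u hu
      have : Submodule.map shiftL (F k) ≤ F k := by
        rw [hF]
        simp only [Submodule.map_span, ← Set.range_comp]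
        refine span_le.2 ?_
        rintro _ ⟨i, rfl⟩
        simp only [Function.comp_apply, hshift]
        rcases lt_or_eq_of_le (Nat.succ_le_of_lt i.2) with h | h
        · exact hFmem h
        · rw [show (i : ℕ) + 1 = k from h]; exact hk
      exact this ⟨u, hu, rfl⟩
    intro m
    induction m with
    | zero =>
      rcases Nat.eq_zero_or_pos k with h | h
      · rw [← h]; exact hk
      · exact hFmem h
    | succ n ih =>
      have := hmap _ ih
      rwa [hshift] at this
  -- There exists k ≤ r with col k ∈ F k
  have lemB : ∀ k : ℕ, (∀ j < k, col j ∉ F j) →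
      LinearIndependent ℂ (fun i : Fin k => col i.1) := by
    intro k
    induction k with
    | zero => intro _; exact linearIndependent_empty_type
    | succ n ih =>
      intro h
      have hind : LinearIndependent ℂ (fun i : Fin n => col i.1) :=
        ih fun j hj => h j (Nat.lt_succ_of_lt hj)
      have hnot : col n ∉ F n := h n (Nat.lt_succ_self n)
      have : LinearIndependent ℂ
          (Fin.snoc (fun i : Fin n => col i.1) (col n) : Fin (n + 1) → (ℕ → ℂ)) :=
        linearIndependent_fin_snoc.2 ⟨hind, hnot⟩
      convert this using 1
      funext i
      rcases lt_or_eq_of_le (Nat.le_of_lt_succ i.2) with hi | hi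
      · rw [show i = Fin.castSucc ⟨i.1, hi⟩ by ext; rfl, Fin.snoc_castSucc]
        rfl
      · rw [show i = Fin.last n by ext; exact hi, Fin.snoc_last]
        rfl
  have hexists : ∃ k ≤ r, col k ∈ F k := by
    by_contra h
    push_neg at h
    have hind : LinearIndependent ℂ (fun i : Fin (r + 1) => col i.1) :=
      lemB (r + 1) fun j hj => h j (Nat.lt_succ_iff.1 hj)
    -- lift to W
    have hmemW : ∀ l, col l ∈ W := fun l => subset_span ⟨l, rfl⟩
    have hindW : LinearIndependent ℂ
        (fun i : Fin (r + 1) => (⟨col i.1, hmemW i.1⟩ : W)) := by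
      refine LinearIndependent.of_comp W.subtype ?_
      convert hind
      rfl
    have := hindW.fintype_card_le_finrank
    rw [hrank] at this
    simp at this
  obtain ⟨k, hkr, hkF⟩ := hexists
  have hP : ∃ k, col k ∈ F k := ⟨k, hkF⟩
  set k₀ := Nat.find hP with hk₀def
  have hk₀spec : col k₀ ∈ F k₀ := Nat.find_spec hP
  have hk₀min : ∀ j < k₀, col j ∉ F j := fun j hj => Nat.find_min hP hj
  have hk₀le : k₀ ≤ r := le_trans (Nat.find_min' hP hkF) hkr
  -- All columns lie in F k₀, hence W ≤ F k₀
  have hall : ∀ m, col m ∈ F k₀ := lemA k₀ hk₀spec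
  have hWle : W ≤ F k₀ := by
    rw [hW]
    refine span_le.2 ?_
    rintro _ ⟨m, rfl⟩
    exact hall m
  have hrle : r ≤ k₀ := by
    calc r = finrank ℂ W := hrank.symm
    _ ≤ finrank ℂ (F k₀) := Submodule.finrank_mono hWle
    _ ≤ k₀ := finrank_span_fin_le _
  have hk₀eq : k₀ = r := le_antisymm hk₀le hrle
  -- first r columns are independent and span everything
  have hind : LinearIndependent ℂ (fun i : Fin r => col i.1) :=
    lemB r fun j hj => hk₀min j (hk₀eq ▸ hj)
  have hallr : ∀ m, col m ∈ F r := hk₀eq ▸ hall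
  -- Now the determinant argument
  intro hdet
  obtain ⟨a, ha, hva⟩ := Matrix.exists_mulVec_eq_zero_iff.2 hdet
  -- the linear functional ψ u = ∑ l, a l * u l
  set ψ : (ℕ → ℂ) →ₗ[ℂ] ℂ :=
    { toFun := fun u => ∑ l : Fin r, a l * u l.1
      map_add' := fun u v => by simp [mul_add, Finset.sum_add_distrib]
      map_smul' := fun c u => by
        simp [Finset.mul_sum, mul_left_comm] } with hψ
  -- ψ vanishes on the first r columns
  have hψcol : ∀ j : Fin r, ψ (col j.1) = 0 := by
    intro j
    have h1 := congr_fun hva j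
    simp only [Matrix.mulVec, dotProduct, Matrix.of_apply, Pi.zero_apply] at h1
    rw [hψ]
    simp only [LinearMap.coe_mk, AddHom.coe_mk, hcol]
    calc ∑ l : Fin r, a l * f (↑l + ↑j)
        = ∑ l : Fin r, f (↑j + ↑l) * a l := by
          refine Finset.sum_congr rfl fun l _ => ?_
          rw [Nat.add_comm (l : ℕ) (j : ℕ), mul_comm]
      _ = 0 := h1
  -- hence ψ vanishes on F r, hence on all columns
  have hψall : ∀ m, ψ (col m) = 0 := by
    intro m
    have hle : F r ≤ LinearMap.ker ψ := by
      rw [hF]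
      refine span_le.2 ?_
      rintro _ ⟨i, rfl⟩
      exact hψcol i
    exact hle (hallr m)
  -- so the combination of columns is zero
  have hzero : ∑ l : Fin r, a l • col l.1 = 0 := by
    funext m
    have h2 := hψall m
    rw [hψ] at h2
    simp only [LinearMap.coe_mk, AddHom.coe_mk, hcol] at h2
    simp only [Finset.sum_apply, Pi.smul_apply, Pi.zero_apply, smul_eq_mul, hcol]
    calc ∑ l : Fin r, a l * f (m + ↑l)
        = ∑ l : Fin r, a l * f (↑l + m) := by
          refine Finset.sum_congr rfl fun l _ => ?_
          rw [Nat.add_comm (m : ℕ) (l : ℕ)]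
      _ = 0 := h2
  have := Fintype.linearIndependent_iff.1 hind a hzero
  exact ha (funext this)
end

section
/- Let A = Hf be an N×N Hankel matrix (A(j,l) = f(j+l), 0 ≤ j,l ≤ N−1) of rank r < N, and assume the r×r upper-left corner submatrix is nonsingular. Then there exist uniquely determined constants λ₀, …, λ_{r−1} ∈ ℂ such that f(k) + Σ_{l=0}^{r−1} λ_l f(k−r+l) = 0 for all k = r, r+1, …, 2N−2. -/
open Matrix Submodule Module

/-- A finite `N × N` Hankel matrix of rank `r < N` whose upper-left `r × r` corner is
nonsingular determines unique recursion coefficients `λ₀, …, λ_{r−1}` such that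
`f(k) + Σ_{l<r} λ_l f(k−r+l) = 0` for `r ≤ k ≤ 2N−2`. -/
theorem finite_hankel_unique_recursion (N : ℕ) (f : ℕ → ℂ) (r : ℕ) (hrN : r < N)
    (hrank : (Matrix.of fun j l : Fin N => f (j.1 + l.1)).rank = r)
    (hcorner : (Matrix.of fun j l : Fin r => f (j.1 + l.1)).det ≠ 0) :
    ∃! lam : Fin r → ℂ, ∀ k, r ≤ k → k ≤ 2 * N - 2 →
      f k + ∑ l : Fin r, lam l * f (k - r + l.1) = 0 := by
  classical
  set A : Matrix (Fin N) (Fin N) ℂ := Matrix.of fun j l : Fin N => f (j.1 + l.1) with hA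
  set C : Matrix (Fin r) (Fin r) ℂ := Matrix.of fun j l : Fin r => f (j.1 + l.1) with hCdef
  have hCunit : IsUnit C.det := isUnit_iff_ne_zero.mpr hcorner
  have hCinj : Function.Injective C.mulVec :=
    Matrix.mulVec_injective_iff_isUnit.mpr ((Matrix.isUnit_iff_isUnit_det C).mpr hCunit)
  set lam : Fin r → ℂ := C⁻¹.mulVec (fun j => -f (r + j.1)) with hlam
  have hbase0 : C.mulVec lam = fun j => -f (r + j.1) := by
    rw [hlam, Matrix.mulVec_mulVec, Matrix.mul_nonsing_inv C hCunit, Matrix.one_mulVec]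
  have hbase : ∀ j : Fin r, (∑ l : Fin r, f (j.1 + l.1) * lam l) = -f (r + j.1) := by
    intro j
    have := congrFun hbase0 j
    simpa [Matrix.mulVec, dotProduct, hCdef] using this
  -- columns of A
  set col : Fin N → (Fin N → ℂ) := fun l j => f (j.1 + l.1) with hcol
  have hmemrange : ∀ l : Fin N, col l ∈ LinearMap.range A.mulVecLin := by
    intro l
    exact ⟨Pi.single l 1, by ext j; simp [Matrix.mulVecLin_apply, hcol, hA]⟩
  set S : Submodule ℂ (Fin N → ℂ) :=
    span ℂ (Set.range fun m : Fin r => col ⟨m.1, m.2.trans hrN⟩) with hSdef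
  have hSle : S ≤ LinearMap.range A.mulVecLin := by
    rw [hSdef, span_le]
    rintro _ ⟨m, rfl⟩
    exact hmemrange _
  have hli : LinearIndependent ℂ (fun m : Fin r => col ⟨m.1, m.2.trans hrN⟩) := by
    rw [Fintype.linearIndependent_iff]
    intro μ hμ
    have hCμ : C.mulVec μ = 0 := by
      ext i
      have := congrFun hμ ⟨i.1, i.2.trans hrN⟩
      simpa [Matrix.mulVec, dotProduct, hCdef, hcol, mul_comm] using this
    have : μ = 0 := hCinj (by rw [hCμ, Matrix.mulVec_zero])
    exact fun i => congrFun this i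
  have hS : S = LinearMap.range A.mulVecLin := by
    apply Submodule.eq_of_le_of_finrank_le hSle
    rw [finrank_span_eq_card hli]
    have : finrank ℂ (LinearMap.range A.mulVecLin) = r := hrank
    rw [this, Fintype.card_fin]
  have hcolmem : ∀ l : Fin N, col l ∈ S := fun l => hS ▸ hmemrange l
  -- injectivity of restriction to first r coordinates on S
  have hker : ∀ v ∈ S, (∀ i : Fin r, v ⟨i.1, i.2.trans hrN⟩ = 0) → v = 0 := by
    intro v hv hv0
    rw [hSdef, mem_span_range_iff_exists_fun] at hv
    obtain ⟨μ, hμ⟩ := hv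
    have hCμ : C.mulVec μ = 0 := by
      ext i
      have h0 := hv0 i
      rw [← hμ] at h0
      simpa [Matrix.mulVec, dotProduct, hCdef, hcol, Finset.sum_apply,
        Pi.smul_apply, smul_eq_mul, mul_comm] using h0
    have hμ0 : μ = 0 := hCinj (by rw [hCμ, Matrix.mulVec_zero])
    rw [← hμ, hμ0]
    simp
  -- main recursion claim, by induction on the column index l
  have main : ∀ l, r ≤ l → l < N →
      ∀ j : Fin N, f (j.1 + l) + ∑ m : Fin r, lam m * f (j.1 + l - r + m.1) = 0 := by
    intro l hrl
    induction l, hrl using Nat.le_induction with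
    | base =>
      intro hrN' j
      -- the vector h of values of g along column r
      set h : Fin N → ℂ :=
        fun j => f (j.1 + r) + ∑ m : Fin r, lam m * f (j.1 + r - r + m.1) with hh
      have hhS : h ∈ S := by
        have : h = col ⟨r, hrN⟩ +
            ∑ m : Fin r, lam m • col ⟨m.1, m.2.trans hrN⟩ := by
          ext j
          simp only [hh, hcol, Pi.add_apply, Finset.sum_apply, Pi.smul_apply, smul_eq_mul]
          congr 1
          refine Finset.sum_congr rfl fun m _ => ?_
          congr 2
          omega
        rw [this]
        exact add_mem (hcolmem _) (sum_mem fun m _ => smul_mem _ _ (hcolmem _))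
      have hz : h = 0 := by
        apply hker h hhS
        intro i
        show f (i.1 + r) + ∑ m : Fin r, lam m * f (i.1 + r - r + m.1) = 0
        have heq : f (i.1 + r) + ∑ m : Fin r, lam m * f (i.1 + r - r + m.1)
            = f (r + i.1) + ∑ m : Fin r, f (i.1 + m.1) * lam m := by
          congr 1
          · congr 1
            omega
          · exact Finset.sum_congr rfl fun m _ => by
              rw [mul_comm]
              congr 2
              omega
        rw [heq, hbase i]
        ring
      have := congrFun hz j
      simpa [hh] using this
    | succ l hrl ih =>
      intro hlN j
      have hlN' : l < N := by omega
      set h : Fin N → ℂ :=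
        fun j => f (j.1 + (l + 1)) + ∑ m : Fin r, lam m * f (j.1 + (l + 1) - r + m.1) with hh
      have hhS : h ∈ S := by
        have : h = col ⟨l + 1, hlN⟩ +
            ∑ m : Fin r, lam m • col ⟨l + 1 - r + m.1, by omega⟩ := by
          ext j
          simp only [hh, hcol, Pi.add_apply, Finset.sum_apply, Pi.smul_apply, smul_eq_mul]
          congr 1
          refine Finset.sum_congr rfl fun m _ => ?_
          congr 2
          omega
        rw [this]
        exact add_mem (hcolmem _) (sum_mem fun m _ => smul_mem _ _ (hcolmem _))
      have hz : h = 0 := by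
        apply hker h hhS
        intro i
        have hi1 : (i.1 + 1) < N := by omega
        have hIH := ih hlN' ⟨i.1 + 1, hi1⟩
        show f (i.1 + (l + 1)) + ∑ m : Fin r, lam m * f (i.1 + (l + 1) - r + m.1) = 0
        have heq : f (i.1 + (l + 1)) + ∑ m : Fin r, lam m * f (i.1 + (l + 1) - r + m.1)
            = f ((i.1 + 1) + l) + ∑ m : Fin r, lam m * f ((i.1 + 1) + l - r + m.1) := by
          congr 1
          · congr 1
            omega
          · exact Finset.sum_congr rfl fun m _ => by
              congr 2
              omega
        rw [heq]
        exact hIH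
      have := congrFun hz j
      simpa [hh] using this
  refine ⟨lam, ?_, ?_⟩
  · intro k hk1 hk2
    set l : ℕ := min k (N - 1) with hl
    have hrl : r ≤ l := by omega
    have hlN : l < N := by omega
    have hjN : k - l < N := by omega
    have hm := main l hrl hlN ⟨k - l, hjN⟩
    have heq : f k + ∑ m : Fin r, lam m * f (k - r + m.1)
        = f ((k - l) + l) + ∑ m : Fin r, lam m * f ((k - l) + l - r + m.1) := by
      congr 1
      · congr 1
        omega
      · exact Finset.sum_congr rfl fun m _ => by
          congr 2
          omega
    rw [heq]
    exact hm
  · intro lam' h'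
    apply hCinj
    rw [hbase0]
    ext j
    have hk1 : r ≤ r + j.1 := Nat.le_add_right _ _
    have hk2 : r + j.1 ≤ 2 * N - 2 := by omega
    have h0 := h' (r + j.1) hk1 hk2
    have h1 : f (r + j.1) + ∑ m : Fin r, f (j.1 + m.1) * lam' m = 0 := by
      rw [← h0]
      congr 1
      exact Finset.sum_congr rfl fun m _ => by
        rw [mul_comm]
        congr 2
        omega
    simp only [Matrix.mulVec, dotProduct, hCdef, Matrix.of_apply]
    rw [eq_neg_iff_add_eq_zero, add_comm]
    exact h1
end

section
/- Let A be an infinite Hankel matrix of rank r with f(k) = Σ_{ν=1}^{p} Q_ν(k) ζ_ν^k (distinct nonzero ζ_ν, deg Q_ν = m_ν − 1, Σ m_ν = r). For k ≥ r, a vector (μ₀,…,μ_k) ∈ ℂ^{k+1} lies in the kernel of the upper-left (k+1)×(k+1) corner submatrix A_k if and only if the polynomial Σ_{l=0}^{k} μ_l x^l is divisible by the central polynomial P(x) = Π_{ν=1}^{p}(x − ζ_ν)^{m_ν} (equivalently, equals Q(x)P(x) for some polynomial Q of degree at most k − r). -/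
open Polynomial

noncomputable def hkWsum (w : ℕ → ℂ) : ℂ[X] →ₗ[ℂ] ℂ where
  toFun F := F.sum fun i c => c * w i
  map_add' F G := Polynomial.sum_add_index F G _ (fun _ => zero_mul _) (fun _ _ _ => add_mul _ _ _)
  map_smul' c F := by
    dsimp only [RingHom.id_apply]
    rw [Polynomial.sum_smul_index F c (fun i c => c * w i) (fun _ => zero_mul _)]
    simp only [Polynomial.sum_def, smul_eq_mul, Finset.mul_sum]
    exact Finset.sum_congr rfl fun i _ => by ring

lemma hkWsum_apply (w : ℕ → ℂ) (F : ℂ[X]) : hkWsum w F = F.sum fun i c => c * w i := rfl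

lemma hkWsum_monomial (w : ℕ → ℂ) (c : ℂ) (n : ℕ) : hkWsum w (C c * X ^ n) = c * w n := by
  rw [hkWsum_apply, C_mul_X_pow_eq_monomial]
  exact Polynomial.sum_monomial_index c _ (zero_mul _)

noncomputable def hkPsi (a : ℂ) (T : ℂ[X]) : ℂ[X] →ₗ[ℂ] ℂ :=
  hkWsum fun i => T.eval (i : ℂ) * a ^ i

lemma hkPsi_apply (a : ℂ) (T : ℂ[X]) (F : ℂ[X]) :
    hkPsi a T F = F.sum fun i c => c * (T.eval (i : ℂ) * a ^ i) := rfl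

lemma hkPsi_monomial (a : ℂ) (T : ℂ[X]) (c : ℂ) (n : ℕ) :
    hkPsi a T (C c * X ^ n) = c * (T.eval (n : ℂ) * a ^ n) :=
  hkWsum_monomial _ c n

lemma hkPsi_zero_T (a : ℂ) (F : ℂ[X]) : hkPsi a 0 F = 0 := by
  rw [hkPsi_apply, Polynomial.sum_def]
  exact Finset.sum_eq_zero fun i _ => by simp

lemma hkPsi_add_T (a : ℂ) (T₁ T₂ : ℂ[X]) (F : ℂ[X]) :
    hkPsi a (T₁ + T₂) F = hkPsi a T₁ F + hkPsi a T₂ F := by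
  simp only [hkPsi_apply]
  simp only [Polynomial.sum_def, ← Finset.sum_add_distrib, eval_add]
  exact Finset.sum_congr rfl fun i _ => by ring

lemma hkPsi_C_mul_T (a c : ℂ) (T : ℂ[X]) (F : ℂ[X]) :
    hkPsi a (C c * T) F = c * hkPsi a T F := by
  simp only [hkPsi_apply]
  simp only [Polynomial.sum_def, Finset.mul_sum, eval_mul, eval_C]
  exact Finset.sum_congr rfl fun i _ => by ring

lemma hkPsi_sub_T (a : ℂ) (T₁ T₂ : ℂ[X]) (F : ℂ[X]) :
    hkPsi a (T₁ - T₂) F = hkPsi a T₁ F - hkPsi a T₂ F := by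
  have h := hkPsi_add_T a (T₁ - T₂) T₂ F
  rw [sub_add_cancel] at h
  rw [eq_sub_iff_add_eq]
  exact h.symm

lemma hkPsi_one (a : ℂ) (F : ℂ[X]) : hkPsi a 1 F = F.eval a := by
  rw [hkPsi_apply, eval_eq_sum]
  simp only [eval_one, one_mul]

/-- the difference operator `T(X+1) - T(X)` -/
noncomputable def hkDelta (T : ℂ[X]) : ℂ[X] := T.comp (X + C 1) - T

lemma hkDelta_eval (T : ℂ[X]) (x : ℂ) : (hkDelta T).eval x = T.eval (x + 1) - T.eval x := by
  simp [hkDelta, eval_comp]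

lemma hkDelta_zero : hkDelta 0 = 0 := by simp [hkDelta]

lemma hkDelta_degree_lt (T : ℂ[X]) (hT : T ≠ 0) : (hkDelta T).degree < T.degree := by
  by_cases hd : T.natDegree = 0
  · obtain ⟨c, rfl⟩ : ∃ c, T = C c := ⟨T.coeff 0, Polynomial.eq_C_of_natDegree_eq_zero hd⟩
    have : hkDelta (C c) = 0 := by simp [hkDelta]
    rw [this, degree_zero, bot_lt_iff_ne_bot, ne_eq, degree_eq_bot]
    exact hT
  · have h1 : (X + C (1:ℂ)).natDegree = 1 := natDegree_X_add_C 1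
    have hlc : (T.comp (X + C 1)).leadingCoeff = T.leadingCoeff := by
      rw [leadingCoeff_comp (by rw [h1]; exact one_ne_zero), leadingCoeff_X_add_C, one_pow, mul_one]
    have hcne : T.comp (X + C 1) ≠ 0 := by
      intro h
      apply hT
      rw [← leadingCoeff_eq_zero, ← hlc, h, leadingCoeff_zero]
    have hdeg : (T.comp (X + C 1)).degree = T.degree := by
      rw [degree_eq_natDegree hcne, degree_eq_natDegree hT, natDegree_comp, h1, mul_one]
    have := degree_sub_lt hdeg hcne hlc
    rwa [hdeg] at this

lemma hkDelta_iter_zero : ∀ (m : ℕ) (T : ℂ[X]), T.degree < (m : ℕ) → hkDelta^[m] T = 0 := by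
  intro m
  induction m with
  | zero =>
    intro T hT
    simp only [Nat.cast_zero] at hT
    have : T = 0 := by
      by_contra h
      exact absurd hT (not_lt.mpr (zero_le_degree_iff.mpr h))
    simpa using this
  | succ n ih =>
    intro T hT
    rw [Function.iterate_succ_apply]
    by_cases h0 : T = 0
    · subst h0
      rw [hkDelta_zero]
      exact ih 0 (by simp [degree_zero])
    · apply ih
      by_cases hD : hkDelta T = 0
      · rw [hD, degree_zero]
        exact bot_lt_iff_ne_bot.mpr (by simp)
      · have h1 : (hkDelta T).degree < T.degree := hkDelta_degree_lt T h0
        have h2 : T.natDegree < n + 1 := (natDegree_lt_iff_degree_lt h0).mpr hT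
        have h3 : (hkDelta T).natDegree < T.natDegree :=
          natDegree_lt_natDegree hD h1
        exact (natDegree_lt_iff_degree_lt hD).mp (by omega)

lemma hkDelta_add (A B : ℂ[X]) : hkDelta (A + B) = hkDelta A + hkDelta B := by
  simp only [hkDelta, add_comp]; ring

lemma hkDelta_C_mul (c : ℂ) (A : ℂ[X]) : hkDelta (C c * A) = C c * hkDelta A := by
  simp only [hkDelta, mul_comp, C_comp]; ring

lemma hkDelta_surj : ∀ (n : ℕ) (S : ℂ[X]), S.natDegree ≤ n →
    ∃ T : ℂ[X], hkDelta T = S ∧ T.natDegree ≤ n + 1 := by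
  intro n
  induction n with
  | zero =>
    intro S hS
    obtain ⟨c, rfl⟩ : ∃ c, S = C c := ⟨S.coeff 0, Polynomial.eq_C_of_natDegree_eq_zero (Nat.le_zero.mp hS)⟩
    refine ⟨C c * X, ?_, ?_⟩
    · simp only [hkDelta, mul_comp, C_comp, X_comp, map_one]; ring
    · exact le_trans (natDegree_mul_le) (by simp)
  | succ n ih =>
    intro S hS
    by_cases hS' : S.natDegree ≤ n
    · obtain ⟨T, hT1, hT2⟩ := ih S hS'
      exact ⟨T, hT1, by omega⟩
    · have hd : S.natDegree = n + 1 := by omega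
      set B : ℂ[X] := hkDelta (X ^ (n + 2)) with hB
      have hBeq : B = (X + C 1) ^ (n + 2) - X ^ (n + 2) := by
        rw [hB, hkDelta, X_pow_comp]
      have hBcoeff : ∀ j, n + 1 < j → B.coeff j = 0 := by
        intro j hj
        rw [hBeq, coeff_sub, coeff_X_add_C_pow]
        rcases eq_or_lt_of_le (Nat.succ_le_of_lt hj) with h | h
        · rw [← h]; simp
        · rw [Nat.choose_eq_zero_of_lt (by omega), coeff_X_pow, if_neg (by omega)]
          simp
      have hBdeg : B.natDegree ≤ n + 1 := natDegree_le_iff_coeff_eq_zero.mpr hBcoeff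
      have hBtop : B.coeff (n + 1) = (n + 2 : ℂ) := by
        rw [hBeq, coeff_sub, coeff_X_add_C_pow, coeff_X_pow, if_neg (by omega)]
        simp [Nat.choose_succ_self_right]
        norm_cast
      set c : ℂ := S.leadingCoeff / (n + 2 : ℂ) with hc
      set S' : ℂ[X] := S - C c * B with hS'def
      have hS'deg : S'.natDegree ≤ n := by
        apply natDegree_le_iff_coeff_eq_zero.mpr
        intro j hj
        rw [hS'def, coeff_sub, coeff_C_mul]
        rcases eq_or_lt_of_le (Nat.succ_le_of_lt hj) with h | h
        · rw [← h]
          show S.coeff (n + 1) - c * B.coeff (n + 1) = 0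
          have h2 : ((n : ℂ) + 2) ≠ 0 := by
            have h3 : ((n + 2 : ℕ) : ℂ) ≠ 0 := Nat.cast_ne_zero.mpr (by omega)
            push_cast at h3; exact h3
          rw [hBtop, hc, div_mul_cancel₀ _ h2, Polynomial.leadingCoeff, hd]
          exact sub_self _
        · rw [coeff_eq_zero_of_natDegree_lt (by omega), hBcoeff j (by omega)]
          simp
      obtain ⟨T', hT'1, hT'2⟩ := ih S' hS'deg
      refine ⟨T' + C c * X ^ (n + 2), ?_, ?_⟩
      · rw [hkDelta_add, hkDelta_C_mul, hT'1, ← hB, hS'def]; ring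
      · apply le_trans (natDegree_add_le _ _)
        apply max_le (by omega)
        exact le_trans (natDegree_C_mul_le _ _) (by simp)

lemma hkKey (a : ℂ) (T F : ℂ[X]) :
    hkPsi a T ((X - C a) * F) = a * hkPsi a (hkDelta T) F := by
  induction F using Polynomial.induction_on' with
  | add p q hp hq =>
    rw [mul_add, map_add, map_add, hp, hq]; ring
  | monomial n c =>
    rw [← C_mul_X_pow_eq_monomial]
    have : (X - C a) * (C c * X ^ n) = C c * X ^ (n + 1) - C (a * c) * X ^ n := by
      rw [C_mul]; ring
    rw [this, map_sub, hkPsi_monomial, hkPsi_monomial, hkPsi_monomial, hkDelta_eval]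
    push_cast
    ring

lemma hkKey_pow (a : ℂ) (T F : ℂ[X]) :
    ∀ m : ℕ, hkPsi a T ((X - C a) ^ m * F) = a ^ m * hkPsi a (hkDelta^[m] T) F := by
  intro m
  induction m generalizing F with
  | zero => simp
  | succ n ih =>
    have : (X - C a) ^ (n + 1) * F = (X - C a) ^ n * ((X - C a) * F) := by ring
    rw [this, ih, hkKey, Function.iterate_succ_apply']
    ring

lemma hkCentral (a : ℂ) (ha : a ≠ 0) (m : ℕ) (F : ℂ[X]) :
    (X - C a) ^ m ∣ F ↔ ∀ T : ℂ[X], T.degree < (m : ℕ) → hkPsi a T F = 0 := by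
  constructor
  · rintro ⟨U, rfl⟩ T hT
    rw [hkKey_pow, hkDelta_iter_zero m T hT, hkPsi_zero_T, mul_zero]
  · induction m generalizing F with
    | zero => intro _; exact one_dvd F
    | succ n ih =>
      intro h
      have h1 : F.eval a = 0 := by
        have := h 1 (by rw [degree_one]; exact_mod_cast Nat.cast_pos.mpr (Nat.succ_pos n))
        rwa [hkPsi_one] at this
      obtain ⟨U, hU⟩ := (dvd_iff_isRoot.mpr h1)
      have hU' : ∀ S : ℂ[X], S.degree < (n : ℕ) → hkPsi a S U = 0 := by
        intro S hS
        by_cases hS0 : S = 0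
        · rw [hS0, hkPsi_zero_T]
        · have hSn' : S.natDegree < n := (natDegree_lt_iff_degree_lt hS0).mpr hS
          obtain ⟨T, hT1, hT2⟩ := hkDelta_surj S.natDegree S le_rfl
          have hTn : T.natDegree < n + 1 := by omega
          have hTd : T.degree < ((n + 1 : ℕ) : WithBot ℕ) :=
            lt_of_le_of_lt degree_le_natDegree (Nat.cast_lt.mpr hTn)
          have := h T hTd
          rw [hU, hkKey, hT1] at this
          exact (mul_eq_zero.mp this).resolve_left ha
      have hdvd := ih U hU'
      rw [hU, pow_succ']
      exact mul_dvd_mul_left _ hdvd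

lemma hkSpan (a : ℂ) (g : ℂ[X]) (m : ℕ) (u : ℕ → ℂ[X])
    (hdeg : ∀ t < m, (u t).natDegree = t) (hne : ∀ t < m, u t ≠ 0)
    (h0 : ∀ t < m, hkPsi a (u t) g = 0) :
    ∀ T : ℂ[X], T.degree < (m : ℕ) → hkPsi a T g = 0 := by
  suffices H : ∀ n : ℕ, ∀ T : ℂ[X], T.natDegree < n → T.degree < (m : ℕ) → hkPsi a T g = 0 by
    exact fun T hT => H (T.natDegree + 1) T (Nat.lt_succ_self _) hT
  intro n
  induction n with
  | zero => exact fun T h => absurd h (Nat.not_lt_zero _)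
  | succ n ih =>
    intro T hTn hTm
    by_cases hT0 : T = 0
    · rw [hT0, hkPsi_zero_T]
    · have hdm : T.natDegree < m := (natDegree_lt_iff_degree_lt hT0).mpr hTm
      set d := T.natDegree with hdd
      have hud : (u d).natDegree = d := hdeg d hdm
      have hun : u d ≠ 0 := hne d hdm
      have hulc : (u d).leadingCoeff ≠ 0 := leadingCoeff_ne_zero.mpr hun
      set c : ℂ := T.leadingCoeff / (u d).leadingCoeff with hc
      have hc0 : c ≠ 0 := div_ne_zero (leadingCoeff_ne_zero.mpr hT0) hulc
      have hlc : (C c * u d).leadingCoeff = T.leadingCoeff := by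
        rw [leadingCoeff_mul, leadingCoeff_C, hc, div_mul_cancel₀ _ hulc]
      have hdeq : T.degree = (C c * u d).degree := by
        rw [degree_C_mul hc0, degree_eq_natDegree hT0, degree_eq_natDegree hun, hud]
      have key : hkPsi a T g = hkPsi a (T - C c * u d) g + c * hkPsi a (u d) g := by
        rw [← hkPsi_C_mul_T, ← hkPsi_add_T, sub_add_cancel]
      rw [key, h0 d hdm, mul_zero, add_zero]
      by_cases hT' : T - C c * u d = 0
      · rw [hT', hkPsi_zero_T]
      · have hdlt : (T - C c * u d).degree < T.degree :=
          degree_sub_lt hdeq hT0 hlc.symm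
        have hnlt : (T - C c * u d).natDegree < T.natDegree :=
          natDegree_lt_natDegree hT' hdlt
        exact ih _ (by omega) (lt_trans hdlt hTm)

lemma hk_taylor_one_leadingCoeff (R : ℂ[X]) : (taylor (1:ℂ) R).leadingCoeff = R.leadingCoeff := by
  by_cases hR : R = 0
  · simp [hR]
  · rw [taylor_apply, leadingCoeff_comp (by rw [natDegree_X_add_C]; exact one_ne_zero),
      leadingCoeff_X_add_C, one_pow, mul_one]

lemma hk_exp_indep {p : ℕ} (ζ : Fin p → ℂ) (hζ : Function.Injective ζ) (hζ0 : ∀ ν, ζ ν ≠ 0) :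
    ∀ (M : ℕ) (R : Fin p → ℂ[X]),
      (∑ ν, (if R ν = 0 then 0 else (R ν).natDegree + 1)) ≤ M →
      (∀ n : ℕ, ∑ ν, (R ν).eval (n : ℂ) * ζ ν ^ n = 0) → ∀ ν, R ν = 0 := by
  intro M
  induction M with
  | zero =>
    intro R hM h ν
    by_contra hR
    have h1 : (∑ ν, (if R ν = 0 then 0 else (R ν).natDegree + 1)) = 0 := Nat.le_zero.mp hM
    have h2 := (Finset.sum_eq_zero_iff.mp h1) ν (Finset.mem_univ ν)
    rw [if_neg hR] at h2
    omega
  | succ M ih =>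
    intro R hM h
    by_cases hall : ∀ ν, R ν = 0
    · exact hall
    push_neg at hall
    obtain ⟨ν1, hν1⟩ := hall
    set R' : Fin p → ℂ[X] := fun ν => C (ζ ν) * taylor 1 (R ν) - C (ζ ν1) * R ν with hR'
    have hsum' : ∀ n : ℕ, ∑ ν, (R' ν).eval (n : ℂ) * ζ ν ^ n = 0 := by
      intro n
      have e1 : ∀ ν, (R' ν).eval (n : ℂ) * ζ ν ^ n
          = (R ν).eval ((n + 1 : ℕ) : ℂ) * ζ ν ^ (n + 1) - ζ ν1 * ((R ν).eval (n : ℂ) * ζ ν ^ n) := by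
        intro ν
        simp only [hR', eval_sub, eval_mul, eval_C, taylor_eval]
        push_cast
        ring
      rw [Finset.sum_congr rfl fun ν _ => e1 ν, Finset.sum_sub_distrib, ← Finset.mul_sum,
        h (n + 1), h n, mul_zero, sub_zero]
    have hle : ∀ ν, (if R' ν = 0 then 0 else (R' ν).natDegree + 1)
        ≤ (if R ν = 0 then 0 else (R ν).natDegree + 1) := by
      intro ν
      by_cases hz : R ν = 0
      · have : R' ν = 0 := by simp [hR', hz]
        simp [this, hz]
      · by_cases hz' : R' ν = 0
        · simp [hz', hz]
        · rw [if_neg hz, if_neg hz']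
          have : (R' ν).natDegree ≤ (R ν).natDegree := by
            apply le_trans (natDegree_sub_le _ _)
            apply max_le
            · exact le_trans (natDegree_C_mul_le _ _) (by rw [natDegree_taylor])
            · exact natDegree_C_mul_le _ _
          omega
    have hlt : (if R' ν1 = 0 then 0 else (R' ν1).natDegree + 1)
        < (if R ν1 = 0 then 0 else (R ν1).natDegree + 1) := by
      rw [if_neg hν1]
      by_cases hz' : R' ν1 = 0
      · simp [hz']
      · rw [if_neg hz']
        have hfac : R' ν1 = C (ζ ν1) * (taylor 1 (R ν1) - R ν1) := by
          rw [hR']; ring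
        have hdiff : taylor (1:ℂ) (R ν1) - R ν1 ≠ 0 := by
          intro hh
          apply hz'
          rw [hfac, hh, mul_zero]
        have hnd : (R ν1).natDegree ≠ 0 := by
          intro hh
          apply hdiff
          obtain ⟨cc, hcc⟩ : ∃ cc, R ν1 = C cc := ⟨(R ν1).coeff 0, Polynomial.eq_C_of_natDegree_eq_zero hh⟩
          rw [hcc, taylor_C, sub_self]
        have htne : taylor (1:ℂ) (R ν1) ≠ 0 := by
          intro hh
          apply hν1
          rw [← leadingCoeff_eq_zero, ← hk_taylor_one_leadingCoeff, hh, leadingCoeff_zero]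
        have hdeq : (taylor (1:ℂ) (R ν1)).degree = (R ν1).degree := by
          rw [degree_eq_natDegree htne, degree_eq_natDegree hν1, natDegree_taylor]
        have hdlt : (taylor (1:ℂ) (R ν1) - R ν1).degree < (R ν1).degree := by
          have := degree_sub_lt hdeq htne (hk_taylor_one_leadingCoeff _)
          rwa [hdeq] at this
        have h5 : (taylor (1:ℂ) (R ν1) - R ν1).natDegree < (R ν1).natDegree :=
          natDegree_lt_natDegree hdiff hdlt
        have h6 : (R' ν1).natDegree ≤ (taylor (1:ℂ) (R ν1) - R ν1).natDegree := by
          rw [hfac]; exact natDegree_C_mul_le _ _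
        omega
    have hmea : (∑ ν, (if R' ν = 0 then 0 else (R' ν).natDegree + 1)) ≤ M := by
      have := Finset.sum_lt_sum (fun ν _ => hle ν) ⟨ν1, Finset.mem_univ ν1, hlt⟩
      omega
    have hz := ih R' hmea hsum'
    have hzz : ∀ ν, ν ≠ ν1 → R ν = 0 := by
      intro ν hne
      by_contra hRν
      have heq : C (ζ ν) * taylor 1 (R ν) = C (ζ ν1) * R ν := by
        have := hz ν
        rw [hR'] at this
        exact sub_eq_zero.mp this
      have hlceq := congrArg Polynomial.leadingCoeff heq
      rw [leadingCoeff_mul, leadingCoeff_mul, leadingCoeff_C, leadingCoeff_C,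
        hk_taylor_one_leadingCoeff] at hlceq
      have hlcne : (R ν).leadingCoeff ≠ 0 := leadingCoeff_ne_zero.mpr hRν
      have : ζ ν = ζ ν1 := mul_right_cancel₀ hlcne hlceq
      exact hne (hζ this)
    exfalso
    apply hν1
    have hroot : ∀ n : ℕ, (R ν1).eval (n : ℂ) = 0 := by
      intro n
      have := h n
      rw [Finset.sum_eq_single_of_mem ν1 (Finset.mem_univ ν1)
        (fun b _ hb => by rw [hzz b hb]; simp)] at this
      exact (mul_eq_zero.mp this).resolve_right (pow_ne_zero n (hζ0 ν1))
    apply Polynomial.eq_zero_of_infinite_isRoot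
    apply Set.infinite_of_injective_forall_mem (f := fun n : ℕ => (n : ℂ)) Nat.cast_injective
    exact fun n => hroot n
/-- Kernel characterization for corner submatrices of an infinite Hankel matrix of
finite rank: for `k ≥ r`, a vector `μ` lies in the kernel of the `(k+1) × (k+1)`
upper-left corner of `Hf` iff the polynomial it generates is divisible by the
central polynomial `P(x) = Π_ν (x − ζ_ν)^{m_ν}`. -/
theorem hankel_corner_kernel_characterization (f : ℕ → ℂ) (p r : ℕ)
    (ζ : Fin p → ℂ) (m : Fin p → ℕ) (Q : Fin p → ℂ[X])
    (hζ : Function.Injective ζ) (hζ0 : ∀ ν, ζ ν ≠ 0)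
    (hm : ∀ ν, 1 ≤ m ν) (hsum : ∑ ν, m ν = r)
    (hQdeg : ∀ ν, (Q ν).natDegree = m ν - 1) (hQne : ∀ ν, Q ν ≠ 0)
    (hf : ∀ j : ℕ, f j = ∑ ν, (Q ν).eval (j : ℂ) * ζ ν ^ j)
    (k : ℕ) (hk : r ≤ k) (μ : Fin (k + 1) → ℂ) :
    (Matrix.of fun j l : Fin (k + 1) => f (j.1 + l.1)).mulVec μ = 0 ↔
      (∏ ν, (X - C (ζ ν)) ^ m ν : ℂ[X]) ∣ ∑ l : Fin (k + 1), C (μ l) * X ^ l.1 := by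
  classical
  set g : ℂ[X] := ∑ l : Fin (k + 1), C (μ l) * X ^ l.1 with hg
  set P : ℂ[X] := ∏ ν, (X - C (ζ ν)) ^ m ν with hP
  set L : ℂ[X] →ₗ[ℂ] ℂ := hkWsum f with hL
  clear_value g P L
  have hLF : ∀ F : ℂ[X], L F = ∑ ν, hkPsi (ζ ν) (Q ν) F := by
    intro F
    rw [hL, hkWsum_apply, Polynomial.sum_def]
    have e1 : ∀ i ∈ F.support, F.coeff i * f i
        = ∑ ν, F.coeff i * ((Q ν).eval (i : ℂ) * ζ ν ^ i) := by
      intro i _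
      rw [hf i, Finset.mul_sum]
    rw [Finset.sum_congr rfl e1, Finset.sum_comm]
    exact Finset.sum_congr rfl fun ν _ => by rw [hkPsi_apply, Polynomial.sum_def]
  have hLP : ∀ T : ℂ[X], L (P * T) = 0 := by
    intro T
    rw [hLF]
    apply Finset.sum_eq_zero
    intro ν _
    have hdvd : (X - C (ζ ν)) ^ m ν ∣ P * T := by
      rw [hP]
      exact dvd_mul_of_dvd_left (Finset.dvd_prod_of_mem _ (Finset.mem_univ ν)) T
    have hQd : (Q ν).degree < ((m ν : ℕ) : WithBot ℕ) := by
      apply lt_of_le_of_lt degree_le_natDegree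
      rw [hQdeg ν]
      exact Nat.cast_lt.mpr (by have := hm ν; omega)
    exact (hkCentral (ζ ν) (hζ0 ν) (m ν) (P * T)).mp hdvd (Q ν) hQd
  have hLXg : ∀ n : ℕ, L (X ^ n * g) = ∑ l : Fin (k + 1), μ l * f (n + l.1) := by
    intro n
    have e2 : X ^ n * g = ∑ l : Fin (k + 1), C (μ l) * X ^ (n + l.1) := by
      rw [hg, Finset.mul_sum]
      exact Finset.sum_congr rfl fun l _ => by rw [pow_add]; ring
    rw [e2, map_sum]
    exact Finset.sum_congr rfl fun l _ => by rw [hL]; exact hkWsum_monomial f (μ l) (n + l.1)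
  have hMV : (Matrix.of fun j l : Fin (k + 1) => f (j.1 + l.1)).mulVec μ = 0 ↔
      ∀ j : Fin (k + 1), L (X ^ j.1 * g) = 0 := by
    rw [funext_iff]
    apply forall_congr'
    intro j
    rw [hLXg j.1]
    simp only [Pi.zero_apply, Matrix.mulVec, dotProduct, Matrix.of_apply]
    constructor
    · intro hh
      rw [← hh]
      exact Finset.sum_congr rfl fun l _ => mul_comm _ _
    · intro hh
      rw [← hh]
      exact Finset.sum_congr rfl fun l _ => mul_comm _ _
  have hPmonic : P.Monic := by
    rw [hP]
    exact monic_prod_of_monic _ _ fun ν _ => (monic_X_sub_C _).pow _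
  have hPne : P ≠ 0 := hPmonic.ne_zero
  have hPdeg : P.natDegree = r := by
    rw [hP, natDegree_prod _ _ fun ν _ => pow_ne_zero _ (X_sub_C_ne_zero _)]
    simp only [natDegree_pow, natDegree_X_sub_C, mul_one]
    exact hsum
  have hAll : (∀ j : Fin (k + 1), L (X ^ j.1 * g) = 0) → ∀ n : ℕ, L (X ^ n * g) = 0 := by
    intro H n
    induction n using Nat.strong_induction_on with
    | _ n ih =>
    by_cases hn : n ≤ k
    · exact H ⟨n, by omega⟩
    · set D : ℂ[X] := X ^ r - P with hD
      have hDdeg : D.degree < ((r : ℕ) : WithBot ℕ) := by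
        have hd1 : (X ^ r : ℂ[X]).degree = P.degree := by
          rw [degree_X_pow, degree_eq_natDegree hPne, hPdeg]
        have hd2 : (X ^ r : ℂ[X]).leadingCoeff = P.leadingCoeff := by
          rw [leadingCoeff_X_pow, hPmonic.leadingCoeff]
        have := degree_sub_lt hd1 (pow_ne_zero r X_ne_zero) hd2
        rwa [degree_X_pow] at this
      have hDsum : D = ∑ i ∈ Finset.range r, C (D.coeff i) * X ^ i := by
        by_cases hD0 : D = 0
        · rw [hD0]
          symm
          apply Finset.sum_eq_zero
          intro i _
          simp
        · have hDn : D.natDegree < r := (natDegree_lt_iff_degree_lt hD0).mpr hDdeg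
          conv_lhs => rw [Polynomial.as_sum_range' D r hDn]
          exact Finset.sum_congr rfl fun i _ => (C_mul_X_pow_eq_monomial).symm
      have hsplit : X ^ n * g = P * (X ^ (n - r) * g)
          + ∑ i ∈ Finset.range r, C (D.coeff i) * (X ^ (n - r + i) * g) := by
        have h3 : X ^ (n - r) * D * g
            = ∑ i ∈ Finset.range r, C (D.coeff i) * (X ^ (n - r + i) * g) := by
          conv_lhs => rw [hDsum]
          rw [Finset.mul_sum, Finset.sum_mul]
          exact Finset.sum_congr rfl fun i _ => by rw [pow_add]; ring
        rw [← h3]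
        have h1 : (X : ℂ[X]) ^ n = X ^ (n - r) * X ^ r := by
          rw [← pow_add]
          congr 1
          omega
        have h2 : (X : ℂ[X]) ^ r = P + D := by rw [hD]; ring
        rw [h1, h2]
        ring
      rw [hsplit, map_add, map_sum, hLP (X ^ (n - r) * g), zero_add]
      apply Finset.sum_eq_zero
      intro i hi
      have hmem := Finset.mem_range.mp hi
      have e4 : L (C (D.coeff i) * (X ^ (n - r + i) * g))
          = D.coeff i * L (X ^ (n - r + i) * g) := by
        rw [← smul_eq_C_mul, map_smul, smul_eq_mul]
      rw [e4, ih (n - r + i) (by omega), mul_zero]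
  constructor
  · intro hker
    have hLn := hAll (hMV.mp hker)
    set Rv : Fin p → ℂ[X] :=
      fun ν => ∑ l : Fin (k + 1), C (μ l * ζ ν ^ l.1) * taylor ((l.1 : ℂ)) (Q ν) with hRv
    have h4 : ∀ n : ℕ, ∑ ν, (Rv ν).eval (n : ℂ) * ζ ν ^ n = 0 := by
      intro n
      have h5 := hLn n
      rw [hLXg n] at h5
      have h6 : ∑ l : Fin (k + 1), μ l * f (n + l.1)
          = ∑ ν, (Rv ν).eval (n : ℂ) * ζ ν ^ n := by
        have e5 : ∀ l : Fin (k + 1), μ l * f (n + l.1)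
            = ∑ ν, μ l * ζ ν ^ l.1 * ((Q ν).eval ((n : ℂ) + (l.1 : ℂ))) * ζ ν ^ n := by
          intro l
          rw [hf (n + l.1), Finset.mul_sum]
          apply Finset.sum_congr rfl
          intro ν _
          rw [pow_add]
          push_cast
          ring
        rw [Finset.sum_congr rfl fun l _ => e5 l, Finset.sum_comm]
        apply Finset.sum_congr rfl
        intro ν _
        rw [hRv, eval_finset_sum, Finset.sum_mul]
        apply Finset.sum_congr rfl
        intro l _
        rw [eval_mul, eval_C, taylor_eval]
      rw [← h6]
      exact h5
    have hR0 : ∀ ν, Rv ν = 0 := hk_exp_indep ζ hζ hζ0 _ Rv le_rfl h4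
    have hPsig : ∀ (a : ℂ) (T : ℂ[X]), hkPsi a T g
        = ∑ l : Fin (k + 1), μ l * (T.eval ((l.1 : ℕ) : ℂ) * a ^ l.1) := by
      intro a T
      rw [hg, map_sum]
      exact Finset.sum_congr rfl fun l _ => hkPsi_monomial a T (μ l) l.1
    have hdvd_each : ∀ ν, (X - C (ζ ν)) ^ m ν ∣ g := by
      intro ν
      have hco : ∀ t : ℕ, hkPsi (ζ ν) (hasseDeriv t (Q ν)) g = 0 := by
        intro t
        have h7 : ∑ l : Fin (k + 1),
            μ l * ζ ν ^ l.1 * (hasseDeriv t (Q ν)).eval ((l.1 : ℕ) : ℂ) = 0 := by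
          have h8 := congrArg (fun q : ℂ[X] => q.coeff t) (hR0 ν)
          simp only [hRv, Polynomial.finset_sum_coeff, coeff_C_mul, taylor_coeff,
            coeff_zero] at h8
          exact h8
        rw [hPsig, ← h7]
        exact Finset.sum_congr rfl fun l _ => by ring
      have hkey : ∀ t < m ν, (hasseDeriv (m ν - 1 - t) (Q ν)).coeff t ≠ 0 := by
        intro t ht
        rw [hasseDeriv_coeff]
        have harg : t + (m ν - 1 - t) = m ν - 1 := by have := hm ν; omega
        rw [harg, ← hQdeg ν]
        apply mul_ne_zero
        · exact Nat.cast_ne_zero.mpr (Nat.choose_pos (Nat.sub_le _ _)).ne'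
        · exact leadingCoeff_ne_zero.mpr (hQne ν)
      have hdegs : ∀ t < m ν, (hasseDeriv (m ν - 1 - t) (Q ν)).natDegree = t := by
        intro t ht
        have h1 : (hasseDeriv (m ν - 1 - t) (Q ν)).natDegree ≤ t := by
          apply le_trans (natDegree_hasseDeriv_le _ _)
          rw [hQdeg ν]
          have := hm ν
          omega
        have h2 : t ≤ (hasseDeriv (m ν - 1 - t) (Q ν)).natDegree :=
          le_natDegree_of_ne_zero (hkey t ht)
        omega
      have hnes : ∀ t < m ν, hasseDeriv (m ν - 1 - t) (Q ν) ≠ 0 := by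
        intro t ht hh
        exact hkey t ht (by rw [hh, coeff_zero])
      exact (hkCentral (ζ ν) (hζ0 ν) (m ν) g).mpr
        (hkSpan (ζ ν) g (m ν) (fun t => hasseDeriv (m ν - 1 - t) (Q ν)) hdegs hnes
          (fun t ht => hco _))
    rw [hP]
    apply Finset.prod_dvd_of_coprime
    · intro ν _ ν' _ hne
      exact (Polynomial.pairwise_coprime_X_sub_C hζ hne).pow
    · exact fun ν _ => hdvd_each ν
  · rintro ⟨W, hW⟩
    apply hMV.mpr
    intro j
    have : X ^ j.1 * g = P * (X ^ j.1 * W) := by rw [hW]; ring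
    rw [this]
    exact hLP _
end
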